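/- arXiv:math/0002024 — 4 statements merged into one kernel-verified Lean document; each statement's English description precedes it below -/
import Mathlib

section
/- Let $c, n, d$ be natural numbers with $c \geq 1$, and let $\alpha : c\Delta_n \to \mathbb{R}_+^d$ be an integral affine mapping (i.e., $\alpha$ is affine and maps lattice points of the dilated unit simplex $c\Delta_n$ to points of $\mathbb{Z}_+^d$). Then there exist a vector $v \in \mathbb{Z}_+^d$ and an integral affine mapping $\beta : \Delta_n \to \mathbb{R}_+^d$ such that $\alpha = v + c\beta$. -/
open Finset in
/-- Lemma 4.4: an integral affine map `α : cΔₙ → ℝ₊^d` decomposes as `α = v + cβ`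
with `v ∈ ℤ₊^d` and `β : Δₙ → ℝ₊^d` integral affine. -/
theorem integral_affine_map_on_dilated_simplex_decomposes
    (c n d : ℕ) (hc : 1 ≤ c)
    (α : (Fin n → ℝ) →ᵃ[ℝ] (Fin d → ℝ))
    (hα : ∀ x : Fin n → ℤ, (∀ i, 0 ≤ x i) → (∑ i, x i) ≤ (c : ℤ) →
      ∀ j, ∃ m : ℤ, 0 ≤ m ∧ α (fun i => (x i : ℝ)) j = (m : ℝ)) :
    ∃ (v : Fin d → ℤ) (β : (Fin n → ℝ) →ᵃ[ℝ] (Fin d → ℝ)),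
      (∀ j, 0 ≤ v j) ∧
      (∀ x : Fin n → ℤ, (∀ i, 0 ≤ x i) → (∑ i, x i) ≤ (1 : ℤ) →
        ∀ j, ∃ m : ℤ, 0 ≤ m ∧ β (fun i => (x i : ℝ)) j = (m : ℝ)) ∧
      (∀ p : Fin n → ℝ, (∀ i, 0 ≤ p i) → (∑ i, p i) ≤ 1 →
        α ((c : ℝ) • p) = (fun j => (v j : ℝ)) + (c : ℝ) • β p) := by
  classical
  have hc0 : (0:ℝ) < (c:ℝ) := by exact_mod_cast Nat.lt_of_lt_of_le Nat.zero_lt_one hc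
  have hcne : (c:ℝ) ≠ 0 := ne_of_gt hc0
  have hcZ : (0:ℤ) < (c:ℤ) := by exact_mod_cast Nat.lt_of_lt_of_le Nat.zero_lt_one hc
  -- integer values at the vertices
  have h0 : ∀ j, ∃ m : ℤ, 0 ≤ m ∧ α (fun i => (((0 : Fin n → ℤ)) i : ℝ)) j = (m : ℝ) :=
    hα 0 (fun i => le_refl 0) (by simp)
  choose a0 ha0nn ha0 using h0
  have hA : ∀ i : Fin n, ∀ j, ∃ m : ℤ, 0 ≤ m ∧
      α (fun k => ((Pi.single i (c:ℤ) : Fin n → ℤ) k : ℝ)) j = (m : ℝ) := by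
    intro i
    refine hα _ (fun k => ?_) ?_
    · rw [Pi.single_apply]; split <;> simp
    · simp [Finset.sum_pi_single']
  choose a hann ha using hA
  have hB : ∀ i : Fin n, ∀ j, ∃ m : ℤ, 0 ≤ m ∧
      α (fun k => ((Pi.single i (1:ℤ) : Fin n → ℤ) k : ℝ)) j = (m : ℝ) := by
    intro i
    refine hα _ (fun k => ?_) ?_
    · rw [Pi.single_apply]; split <;> simp
    · simp [Finset.sum_pi_single']; exact_mod_cast hc
  choose b hbnn hb using hB
  -- basic affine computations
  have hzero : (fun i => (((0 : Fin n → ℤ)) i : ℝ)) = (0 : Fin n → ℝ) := by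
    funext i; simp
  have hα0 : ∀ j, α 0 j = (a0 j : ℝ) := by
    intro j; rw [← hzero]; exact ha0 j
  have hlin : ∀ p : Fin n → ℝ, α p = α 0 + α.linear p := by
    intro p
    have := α.map_vadd (0 : Fin n → ℝ) p
    simpa [vadd_eq_add, add_comm] using this
  -- key congruence: a i j = a0 j + c * (b i j - a0 j)
  have key : ∀ i j, a i j = a0 j + (c:ℤ) * (b i j - a0 j) := by
    intro i j
    have hq : (fun k => ((Pi.single i (c:ℤ) : Fin n → ℤ) k : ℝ))
        = (c:ℝ) • (fun k => ((Pi.single i (1:ℤ) : Fin n → ℤ) k : ℝ)) := by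
      funext k
      simp only [Pi.single_apply, Pi.smul_apply, smul_eq_mul]
      split <;> simp
    have h1 : (a i j : ℝ) = α ((c:ℝ) • (fun k => ((Pi.single i (1:ℤ) : Fin n → ℤ) k : ℝ))) j := by
      rw [← hq]; exact (ha i j).symm
    have h2 : (b i j : ℝ) = α (fun k => ((Pi.single i (1:ℤ) : Fin n → ℤ) k : ℝ)) j := (hb i j).symm
    rw [hlin] at h1 h2
    have h1' : (a i j : ℝ) = (a0 j : ℝ) + (c:ℝ) *
        α.linear (fun k => ((Pi.single i (1:ℤ) : Fin n → ℤ) k : ℝ)) j := by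
      rw [h1]; simp [hα0 j]
    have h2' : α.linear (fun k => ((Pi.single i (1:ℤ) : Fin n → ℤ) k : ℝ)) j
        = (b i j : ℝ) - (a0 j : ℝ) := by
      rw [h2]; simp [hα0 j]
    have : (a i j : ℝ) = (a0 j : ℝ) + (c:ℝ) * ((b i j : ℝ) - (a0 j : ℝ)) := by
      rw [h1', h2']
    exact_mod_cast this
  -- the vector v : componentwise min over the vertex values
  set F : Fin d → Fin (n+1) → ℤ := fun j => Fin.cons (a0 j) (fun i => a i j) with hF
  set v : Fin d → ℤ := fun j => (Finset.univ : Finset (Fin (n+1))).inf'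
      ⟨0, Finset.mem_univ 0⟩ (F j) with hv
  have hFprop : ∀ j k, 0 ≤ F j k ∧ (c:ℤ) ∣ (F j k - a0 j) := by
    intro j k
    refine Fin.cases ?_ ?_ k
    · simp [hF, ha0nn j]
    · intro i
      constructor
      · simpa [hF] using hann i j
      · simp only [hF, Fin.cons_succ]
        rw [key i j]
        exact ⟨b i j - a0 j, by ring⟩
  have hvnn : ∀ j, 0 ≤ v j := by
    intro j
    obtain ⟨k, -, hk⟩ := Finset.exists_mem_eq_inf' ⟨0, Finset.mem_univ (0 : Fin (n+1))⟩ (F j)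
    rw [hv]; dsimp only; rw [hk]
    exact (hFprop j k).1
  have hvdvd : ∀ j, (c:ℤ) ∣ (a0 j - v j) := by
    intro j
    obtain ⟨k, -, hk⟩ := Finset.exists_mem_eq_inf' ⟨0, Finset.mem_univ (0 : Fin (n+1))⟩ (F j)
    rw [hv]; dsimp only; rw [hk]
    obtain ⟨t, ht⟩ := (hFprop j k).2
    exact ⟨-t, by linarith⟩
  have hvle0 : ∀ j, v j ≤ a0 j := by
    intro j
    have := Finset.inf'_le (F j) (Finset.mem_univ (0 : Fin (n+1)))
    simpa [hv, hF] using this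
  have hvlei : ∀ i j, v j ≤ a i j := by
    intro i j
    have := Finset.inf'_le (F j) (Finset.mem_univ i.succ)
    simpa [hv, hF] using this
  -- the affine map β
  set β : (Fin n → ℝ) →ᵃ[ℝ] (Fin d → ℝ) :=
    (c:ℝ)⁻¹ • (α.comp (AffineMap.homothety (0 : Fin n → ℝ) (c:ℝ)) -
      AffineMap.const ℝ (Fin n → ℝ) (fun j => (v j : ℝ))) with hβdef
  have hβ : ∀ p, β p = (c:ℝ)⁻¹ • (α ((c:ℝ) • p) - (fun j => (v j : ℝ))) := by
    intro p; simp [hβdef, AffineMap.homothety_apply]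
  refine ⟨v, β, hvnn, ?_, ?_⟩
  · -- integrality of β on Δₙ
    intro x hx hsum j
    -- x = 0 or x = Pi.single i₀ 1
    by_cases hxz : ∀ i, x i = 0
    · have hx0 : (fun i => (x i : ℝ)) = (0 : Fin n → ℝ) := by
        funext i; simp [hxz i]
      obtain ⟨t, ht⟩ := hvdvd j
      refine ⟨t, ?_, ?_⟩
      · have h1 : 0 ≤ (c:ℤ) * t := by rw [← ht]; linarith [hvle0 j]
        exact nonneg_of_mul_nonneg_right h1 hcZ
      · rw [hx0, hβ]
        have : α ((c:ℝ) • (0 : Fin n → ℝ)) j = (a0 j : ℝ) := by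
          rw [smul_zero]; exact hα0 j
        simp only [Pi.smul_apply, Pi.sub_apply, this, smul_eq_mul]
        have : (a0 j : ℝ) - (v j : ℝ) = (c:ℝ) * (t:ℝ) := by
          exact_mod_cast congrArg (fun z : ℤ => (z : ℝ)) ht
        rw [this]
        field_simp
    · push_neg at hxz
      obtain ⟨i₀, hi₀⟩ := hxz
      have hx1 : x i₀ = 1 := by
        have h1 : 1 ≤ x i₀ := lt_of_le_of_ne (hx i₀) (Ne.symm hi₀)
        have h2 : x i₀ ≤ ∑ i, x i :=
          Finset.single_le_sum (fun i _ => hx i) (Finset.mem_univ i₀)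
        omega
      have hxo : ∀ i, i ≠ i₀ → x i = 0 := by
        intro i hi
        have hsplit : ∑ k, x k = x i₀ + ∑ k ∈ Finset.univ.erase i₀, x k := by
          rw [← Finset.add_sum_erase _ _ (Finset.mem_univ i₀)]
        have hnn : 0 ≤ ∑ k ∈ Finset.univ.erase i₀, x k :=
          Finset.sum_nonneg (fun k _ => hx k)
        have hle : ∑ k ∈ Finset.univ.erase i₀, x k ≤ 0 := by omega
        have := (Finset.sum_eq_zero_iff_of_nonneg (fun k _ => hx k)).1 (le_antisymm hle hnn)
        exact this i (Finset.mem_erase.2 ⟨hi, Finset.mem_univ i⟩)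
      have hxs : (fun i => (x i : ℝ)) = (fun k => ((Pi.single i₀ (1:ℤ) : Fin n → ℤ) k : ℝ)) := by
        funext i
        by_cases hii : i = i₀
        · subst hii; simp [hx1]
        · simp [hxo i hii, Pi.single_apply, hii]
      have hcs : (c:ℝ) • (fun k => ((Pi.single i₀ (1:ℤ) : Fin n → ℤ) k : ℝ))
          = (fun k => ((Pi.single i₀ (c:ℤ) : Fin n → ℤ) k : ℝ)) := by
        funext k
        simp only [Pi.single_apply, Pi.smul_apply, smul_eq_mul]
        split <;> simp
      have hdvd : (c:ℤ) ∣ (a i₀ j - v j) := by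
        obtain ⟨t, ht⟩ := hvdvd j
        refine ⟨(b i₀ j - a0 j) + t, ?_⟩
        rw [key i₀ j]; linarith [ht]
      obtain ⟨t, ht⟩ := hdvd
      refine ⟨t, ?_, ?_⟩
      · have h1 : 0 ≤ (c:ℤ) * t := by rw [← ht]; linarith [hvlei i₀ j]
        exact nonneg_of_mul_nonneg_right h1 hcZ
      · rw [hxs, hβ]
        have hval : α ((c:ℝ) • (fun k => ((Pi.single i₀ (1:ℤ) : Fin n → ℤ) k : ℝ))) j = (a i₀ j : ℝ) := by
          rw [hcs]; exact ha i₀ j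
        simp only [Pi.smul_apply, Pi.sub_apply, hval, smul_eq_mul]
        have : (a i₀ j : ℝ) - (v j : ℝ) = (c:ℝ) * (t:ℝ) := by
          exact_mod_cast congrArg (fun z : ℤ => (z : ℝ)) ht
        rw [this]
        field_simp
  · -- the decomposition identity
    intro p _ _
    funext j
    rw [hβ p]
    simp only [Pi.add_apply, Pi.smul_apply, Pi.sub_apply, smul_eq_mul]
    field_simp
    ring
end

section
/- Up to unimodular integral-affine equivalence, there are exactly two lattice triangles in $\mathbb{R}^2$ containing exactly 4 lattice points: $\mathrm{conv}((1,0),(0,1),(-1,0))$ and $\mathrm{conv}((1,0),(0,1),(-1,-1))$. -/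
/-- Coercion of an integral point of the plane to a real point. -/
def toR2 (p : Fin 2 → ℤ) : Fin 2 → ℝ := fun i => (p i : ℝ)

/-- The lattice points of a subset of the plane. -/
def latticePts (T : Set (Fin 2 → ℝ)) : Set (Fin 2 → ℤ) := {p | toR2 p ∈ T}

/-- Unimodular integral-affine equivalence of subsets of the plane:
`x ↦ Ax + b` with `A ∈ GL₂(ℤ)`, `b ∈ ℤ²`, mapping `S` onto `T`. -/
def UnimodEquiv (S T : Set (Fin 2 → ℝ)) : Prop :=
  ∃ (A : Matrix (Fin 2) (Fin 2) ℤ) (b : Fin 2 → ℤ), IsUnit A.det ∧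
    (fun x => (A.map (Int.cast : ℤ → ℝ)).mulVec x + toR2 b) '' S = T

/-- The triangle `conv((1,0),(0,1),(-1,0))`. -/
noncomputable def Tri1 : Set (Fin 2 → ℝ) :=
  convexHull ℝ {toR2 ![1, 0], toR2 ![0, 1], toR2 ![-1, 0]}

/-- The triangle `conv((1,0),(0,1),(-1,-1))`. -/
noncomputable def Tri2 : Set (Fin 2 → ℝ) :=
  convexHull ℝ {toR2 ![1, 0], toR2 ![0, 1], toR2 ![-1, -1]}

lemma toR2_inj : Function.Injective toR2 := by
  intro x y h
  funext i
  have := congrFun h i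
  simpa [toR2] using this

lemma vec_eq_iff (x : Fin 2 → ℤ) (m n : ℤ) : x = ![m, n] ↔ x 0 = m ∧ x 1 = n := by
  rw [funext_iff, Fin.forall_fin_two]; simp

open Matrix in
lemma map_toR2 (A : Matrix (Fin 2) (Fin 2) ℤ) (b x : Fin 2 → ℤ) :
    (A.map (Int.cast : ℤ → ℝ)).mulVec (toR2 x) + toR2 b = toR2 (A.mulVec x + b) := by
  funext i
  fin_cases i <;> simp [Matrix.mulVec, dotProduct, toR2, Fin.sum_univ_two, Matrix.map_apply]

/-- the affine map over ℝ associated to (A, b). -/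
noncomputable def affMap (A : Matrix (Fin 2) (Fin 2) ℤ) (b : Fin 2 → ℤ) :
    (Fin 2 → ℝ) →ᵃ[ℝ] (Fin 2 → ℝ) where
  toFun := fun x => (A.map (Int.cast : ℤ → ℝ)).mulVec x + toR2 b
  linear := (A.map (Int.cast : ℤ → ℝ)).mulVecLin
  map_vadd' := by
    intro p v
    simp only [Matrix.mulVecLin_apply, Matrix.mulVec_add, vadd_eq_add]
    abel

lemma affMap_apply (A : Matrix (Fin 2) (Fin 2) ℤ) (b : Fin 2 → ℤ) (x : Fin 2 → ℝ) :
    affMap A b x = (A.map (Int.cast : ℤ → ℝ)).mulVec x + toR2 b := rfl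

open Matrix in
lemma unimodEquiv_hull (A : Matrix (Fin 2) (Fin 2) ℤ) (b : Fin 2 → ℤ) (h : IsUnit A.det)
    (p q r : Fin 2 → ℤ) :
    UnimodEquiv (convexHull ℝ {toR2 p, toR2 q, toR2 r})
      (convexHull ℝ {toR2 (A.mulVec p + b), toR2 (A.mulVec q + b), toR2 (A.mulVec r + b)}) := by
  refine ⟨A, b, h, ?_⟩
  have : (fun x => (A.map (Int.cast : ℤ → ℝ)).mulVec x + toR2 b) = ⇑(affMap A b) := rfl
  rw [this, AffineMap.image_convexHull]
  congr 1
  simp only [Set.image_insert_eq, Set.image_singleton, affMap_apply, map_toR2]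


open Matrix in
lemma latticePts_image {S T : Set (Fin 2 → ℝ)} (A : Matrix (Fin 2) (Fin 2) ℤ) (b : Fin 2 → ℤ)
    (hA : IsUnit A.det)
    (him : (fun x => (A.map (Int.cast : ℤ → ℝ)).mulVec x + toR2 b) '' S = T) :
    latticePts T = (fun x => A.mulVec x + b) '' latticePts S := by
  have hBA : A⁻¹ * A = 1 := Matrix.nonsing_inv_mul A hA
  have hAB : A * A⁻¹ = 1 := Matrix.mul_nonsing_inv A hA
  ext t
  constructor
  · intro ht
    have : toR2 t ∈ T := ht
    rw [← him] at this
    obtain ⟨y, hyS, hy⟩ := this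
    refine ⟨A⁻¹.mulVec (t - b), ?_, ?_⟩
    · show toR2 _ ∈ S
      have h1 : A.mulVec (A⁻¹.mulVec (t - b)) + b = t := by
        rw [Matrix.mulVec_mulVec, hAB, Matrix.one_mulVec]; abel
      -- y = toR2 (A⁻¹.mulVec (t - b))
      have h2 : (fun x => (A.map (Int.cast : ℤ → ℝ)).mulVec x + toR2 b)
          (toR2 (A⁻¹.mulVec (t - b))) = toR2 t := by
        simp only [map_toR2, h1]
      -- injectivity of the real map
      have hinj : Function.Injective
          (fun x : Fin 2 → ℝ => (A.map (Int.cast : ℤ → ℝ)).mulVec x + toR2 b) := by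
        intro u v huv
        have h3 : (A.map (Int.cast : ℤ → ℝ)).mulVec u = (A.map (Int.cast : ℤ → ℝ)).mulVec v :=
          add_right_cancel huv
        have h4 := congrArg ((A⁻¹.map (Int.cast : ℤ → ℝ)).mulVec) h3
        rw [Matrix.mulVec_mulVec, Matrix.mulVec_mulVec] at h4
        have h5 : (A⁻¹.map (Int.cast : ℤ → ℝ)) * (A.map (Int.cast : ℤ → ℝ)) = 1 := by
          have := Matrix.map_mul (L := A⁻¹) (M := A) (f := Int.castRingHom ℝ)
          simp only [hBA] at this
          simpa using this.symm
        rwa [h5, Matrix.one_mulVec, Matrix.one_mulVec] at h4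
      have := hinj (h2.trans hy.symm)
      rw [← this] at hyS; exact hyS
    · show A.mulVec (A⁻¹.mulVec (t - b)) + b = t
      rw [Matrix.mulVec_mulVec, hAB, Matrix.one_mulVec]; abel
  · rintro ⟨x, hx, rfl⟩
    show toR2 _ ∈ T
    rw [← him]
    exact ⟨toR2 x, hx, map_toR2 A b x⟩

open Matrix in
lemma mulVec_add_injective (A : Matrix (Fin 2) (Fin 2) ℤ) (b : Fin 2 → ℤ) (hA : IsUnit A.det) :
    Function.Injective (fun x : Fin 2 → ℤ => A.mulVec x + b) := by
  have hBA : A⁻¹ * A = 1 := Matrix.nonsing_inv_mul A hA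
  intro u v huv
  simp only at huv
  have h3 : A.mulVec u = A.mulVec v := add_right_cancel huv
  have := congrArg (A⁻¹.mulVec) h3
  rw [Matrix.mulVec_mulVec, Matrix.mulVec_mulVec, hBA, Matrix.one_mulVec,
    Matrix.one_mulVec] at this
  exact this

lemma ncard_latticePts_eq {S T : Set (Fin 2 → ℝ)} (h : UnimodEquiv S T) :
    (latticePts S).ncard = (latticePts T).ncard := by
  obtain ⟨A, b, hA, him⟩ := h
  rw [latticePts_image A b hA him]
  exact (Set.ncard_image_of_injective _ (mulVec_add_injective A b hA)).symm

lemma unimodEquiv_refl (S : Set (Fin 2 → ℝ)) : UnimodEquiv S S := by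
  refine ⟨1, 0, by simp, ?_⟩
  have : (fun x : Fin 2 → ℝ => ((1 : Matrix (Fin 2) (Fin 2) ℤ).map (Int.cast : ℤ → ℝ)).mulVec x + toR2 0) = id := by
    funext x
    have : toR2 (0 : Fin 2 → ℤ) = 0 := by funext i; simp [toR2]
    simp [Matrix.map_one, this]
  rw [this, Set.image_id]

lemma unimodEquiv_trans {S T U : Set (Fin 2 → ℝ)} (h1 : UnimodEquiv S T) (h2 : UnimodEquiv T U) :
    UnimodEquiv S U := by
  obtain ⟨A, b, hA, him⟩ := h1
  obtain ⟨A', b', hA', him'⟩ := h2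
  refine ⟨A' * A, A'.mulVec b + b', by rw [Matrix.det_mul]; exact hA'.mul hA, ?_⟩
  rw [← him', ← him, ← Set.image_comp]
  have hfun : ((fun x => (A'.map (Int.cast : ℤ → ℝ)).mulVec x + toR2 b') ∘
      fun x => (A.map (Int.cast : ℤ → ℝ)).mulVec x + toR2 b)
      = fun x => (((A' * A).map (Int.cast : ℤ → ℝ))).mulVec x + toR2 (A'.mulVec b + b') := by
    funext x
    show (A'.map (Int.cast : ℤ → ℝ)).mulVec ((A.map (Int.cast : ℤ → ℝ)).mulVec x + toR2 b) + toR2 b'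
      = ((A' * A).map (Int.cast : ℤ → ℝ)).mulVec x + toR2 (A'.mulVec b + b')
    have hmm : ((A' * A).map (Int.cast : ℤ → ℝ)) =
        (A'.map (Int.cast : ℤ → ℝ)) * (A.map (Int.cast : ℤ → ℝ)) := by
      have := Matrix.map_mul (L := A') (M := A) (f := Int.castRingHom ℝ)
      simpa using this
    rw [Matrix.mulVec_add, hmm, ← Matrix.mulVec_mulVec, add_assoc, map_toR2]
  rw [hfun]

lemma unimodEquiv_symm {S T : Set (Fin 2 → ℝ)} (h : UnimodEquiv S T) : UnimodEquiv T S := by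
  obtain ⟨A, b, hA, him⟩ := h
  have hBA : A⁻¹ * A = 1 := Matrix.nonsing_inv_mul A hA
  have hAB : A * A⁻¹ = 1 := Matrix.mul_nonsing_inv A hA
  refine ⟨A⁻¹, -(A⁻¹.mulVec b), ?_, ?_⟩
  · have : A⁻¹.det * A.det = 1 := by rw [← Matrix.det_mul, hBA, Matrix.det_one]
    exact IsUnit.of_mul_eq_one _ this
  · rw [← him, ← Set.image_comp]
    have : ((fun x => ((A⁻¹).map (Int.cast : ℤ → ℝ)).mulVec x + toR2 (-(A⁻¹.mulVec b))) ∘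
        fun x => (A.map (Int.cast : ℤ → ℝ)).mulVec x + toR2 b) = id := by
      funext x
      simp only [Function.comp_apply, id_eq]
      rw [Matrix.mulVec_add, add_assoc, map_toR2]
      have h5 : ((A⁻¹).map (Int.cast : ℤ → ℝ)) * (A.map (Int.cast : ℤ → ℝ)) = 1 := by
        have := Matrix.map_mul (L := A⁻¹) (M := A) (f := Int.castRingHom ℝ)
        simp only [hBA] at this
        simpa using this.symm
      rw [Matrix.mulVec_mulVec, h5, Matrix.one_mulVec]
      have : toR2 (A⁻¹.mulVec b + -(A⁻¹.mulVec b)) = 0 := by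
        funext i; rw [add_neg_cancel]; simp [toR2]
      rw [this, add_zero]
    rw [this, Set.image_id]


lemma mem_hull_of_weights (V W : Fin 2 → ℝ) (s r : ℝ) (hs : 0 ≤ s) (hr : 0 ≤ r)
    (h1 : s + r ≤ 1) : s • V + r • W ∈ convexHull ℝ ({0, V, W} : Set (Fin 2 → ℝ)) := by
  have h0 : (0 : Fin 2 → ℝ) ∈ convexHull ℝ ({0, V, W} : Set (Fin 2 → ℝ)) :=
    subset_convexHull _ _ (by simp)
  by_cases ht : s + r = 0
  · have hs0 : s = 0 := by linarith
    have hr0 : r = 0 := by linarith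
    rw [hs0, hr0]; simpa using h0
  · have htpos : 0 < s + r := lt_of_le_of_ne (by linarith) (Ne.symm ht)
    set t := s + r with hts
    have hz : (s/t) • V + (r/t) • W ∈ convexHull ℝ ({0, V, W} : Set (Fin 2 → ℝ)) := by
      have hseg : segment ℝ V W ⊆ convexHull ℝ ({0, V, W} : Set (Fin 2 → ℝ)) :=
        (convex_convexHull ℝ _).segment_subset
          (subset_convexHull _ _ (by simp)) (subset_convexHull _ _ (by simp))
      apply hseg
      exact ⟨s/t, r/t, div_nonneg hs htpos.le, div_nonneg hr htpos.le,
        by field_simp; exact hts.symm, rfl⟩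
    have hseg2 : segment ℝ 0 ((s/t) • V + (r/t) • W) ⊆
        convexHull ℝ ({0, V, W} : Set (Fin 2 → ℝ)) :=
      (convex_convexHull ℝ _).segment_subset h0 hz
    apply hseg2
    refine ⟨1 - t, t, by linarith, htpos.le, by ring, ?_⟩
    rw [smul_zero, zero_add, smul_add, smul_smul, smul_smul]
    rw [mul_div_cancel₀ _ ht, mul_div_cancel₀ _ ht]

lemma mem_hull_iff (v w : Fin 2 → ℤ) (hd : 0 < v 0 * w 1 - v 1 * w 0) (x : Fin 2 → ℤ) :
    toR2 x ∈ convexHull ℝ ({0, toR2 v, toR2 w} : Set (Fin 2 → ℝ)) ↔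
      0 ≤ x 0 * w 1 - x 1 * w 0 ∧ 0 ≤ v 0 * x 1 - v 1 * x 0 ∧
        (x 0 * w 1 - x 1 * w 0) + (v 0 * x 1 - v 1 * x 0) ≤ v 0 * w 1 - v 1 * w 0 := by
  have hdR : (0 : ℝ) < (v 0 : ℝ) * (w 1 : ℝ) - (v 1 : ℝ) * (w 0 : ℝ) := by exact_mod_cast hd
  constructor
  · intro hx
    set H : Set (Fin 2 → ℝ) := {y | 0 ≤ y 0 * (w 1 : ℝ) - y 1 * (w 0 : ℝ) ∧
        0 ≤ (v 0 : ℝ) * y 1 - (v 1 : ℝ) * y 0 ∧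
        (y 0 * (w 1 : ℝ) - y 1 * (w 0 : ℝ)) + ((v 0 : ℝ) * y 1 - (v 1 : ℝ) * y 0)
          ≤ (v 0 : ℝ) * (w 1 : ℝ) - (v 1 : ℝ) * (w 0 : ℝ)} with hH
    have hconv : Convex ℝ H := by
      intro y hy z hz a b ha hb hab
      obtain ⟨hy1, hy2, hy3⟩ := hy
      obtain ⟨hz1, hz2, hz3⟩ := hz
      refine ⟨?_, ?_, ?_⟩ <;>
        · simp only [Pi.add_apply, Pi.smul_apply, smul_eq_mul]
          nlinarith [mul_nonneg ha hy1, mul_nonneg hb hz1, mul_nonneg ha hy2,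
            mul_nonneg hb hz2, mul_le_mul_of_nonneg_left hy3 ha,
            mul_le_mul_of_nonneg_left hz3 hb]
    have hsub : convexHull ℝ ({0, toR2 v, toR2 w} : Set (Fin 2 → ℝ)) ⊆ H := by
      apply convexHull_min _ hconv
      intro y hy
      simp only [Set.mem_insert_iff, Set.mem_singleton_iff] at hy
      rcases hy with rfl | rfl | rfl
      · refine ⟨?_, ?_, ?_⟩ <;> · simp; try linarith
      · refine ⟨?_, ?_, ?_⟩ <;> · simp [toR2]; try nlinarith
      · refine ⟨?_, ?_, ?_⟩ <;> · simp [toR2]; try nlinarith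
    have := hsub hx
    rw [hH] at this
    obtain ⟨h1, h2, h3⟩ := this
    simp only [toR2] at h1 h2 h3
    refine ⟨by exact_mod_cast h1, by exact_mod_cast h2, by exact_mod_cast h3⟩
  · rintro ⟨h1, h2, h3⟩
    set D : ℝ := (v 0 : ℝ) * (w 1 : ℝ) - (v 1 : ℝ) * (w 0 : ℝ) with hD
    set s : ℝ := ((x 0 : ℝ) * (w 1 : ℝ) - (x 1 : ℝ) * (w 0 : ℝ)) / D with hs
    set rr : ℝ := ((v 0 : ℝ) * (x 1 : ℝ) - (v 1 : ℝ) * (x 0 : ℝ)) / D with hr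
    have hDne : D ≠ 0 := ne_of_gt hdR
    have hs0 : 0 ≤ s := div_nonneg (by exact_mod_cast h1) hdR.le
    have hr0 : 0 ≤ rr := div_nonneg (by exact_mod_cast h2) hdR.le
    have hsum : s + rr ≤ 1 := by
      rw [hs, hr, ← add_div, div_le_one hdR, hD]
      exact_mod_cast h3
    have hxeq : toR2 x = s • toR2 v + rr • toR2 w := by
      have hDne' : (v 0 : ℝ) * (w 1 : ℝ) - (v 1 : ℝ) * (w 0 : ℝ) ≠ 0 := hDne
      funext i
      fin_cases i <;>
      · simp only [toR2, Pi.add_apply, Pi.smul_apply, smul_eq_mul, hs, hr, hD, Fin.zero_eta,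
          Fin.mk_one]
        rw [div_mul_eq_mul_div, div_mul_eq_mul_div, ← add_div, eq_div_iff hDne']
        ring
    rw [hxeq]
    exact mem_hull_of_weights _ _ _ _ hs0 hr0 hsum


lemma mul_ediv_self_le {n c : ℤ} (hc : c ≠ 0) : c * (n / c) ≤ n := by
  have h1 := Int.mul_ediv_add_emod n c
  have h2 := Int.emod_nonneg n hc
  linarith

lemma ediv_split {c : ℤ} (hc : 0 < c) (u v : ℤ) :
    (u + v) / c = (u % c + v % c) / c + (u / c + v / c) := by
  have he : u + v = (u % c + v % c) + (u / c + v / c) * c := by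
    have h1 := Int.mul_ediv_add_emod u c
    have h2 := Int.mul_ediv_add_emod v c
    nlinarith [h1, h2]
  rw [he, Int.add_mul_ediv_right _ _ hc.ne']

lemma ediv_superadd {c : ℤ} (hc : 0 < c) (u v : ℤ) : (u + v) / c ≤ u / c + v / c + 1 := by
  rw [ediv_split hc]
  have h1 : u % c + v % c < 2 * c := by
    have := Int.emod_lt_of_pos u hc
    have := Int.emod_lt_of_pos v hc
    linarith
  have : (u % c + v % c) / c < 2 := by
    rw [Int.ediv_lt_iff_lt_mul hc]
    linarith
  linarith

lemma ediv_subadd {c : ℤ} (hc : 0 < c) (u v : ℤ) : u / c + v / c ≤ (u + v) / c := by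
  rw [ediv_split hc]
  have : 0 ≤ (u % c + v % c) / c :=
    Int.ediv_nonneg (add_nonneg (Int.emod_nonneg u hc.ne') (Int.emod_nonneg v hc.ne')) hc.le
  linarith

lemma pairing (a b c j : ℤ) (hc : 0 < c) :
    a - 2 ≤ (j*b + a*(c-j))/c + (-(j*b))/c + (((c-j)*b + a*j)/c + (-((c-j)*b))/c) := by
  have h1 : (j*b + a*(c-j)) / c + ((c-j)*b + a*j) / c ≥ (a + b) - 1 := by
    have := ediv_superadd hc (j*b + a*(c-j)) ((c-j)*b + a*j)
    have he : (j*b + a*(c-j)) + ((c-j)*b + a*j) = (a+b)*c := by ring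
    rw [he, Int.mul_ediv_cancel _ hc.ne'] at this
    linarith
  have h2 : (-(j*b)) / c + (-((c-j)*b)) / c ≥ -b - 1 := by
    have := ediv_superadd hc (-(j*b)) (-((c-j)*b))
    have he : (-(j*b)) + (-((c-j)*b)) = (-b)*c := by ring
    rw [he, Int.mul_ediv_cancel _ hc.ne'] at this
    linarith
  linarith

lemma r_nonneg {a b c j : ℤ} (hc : 0 < c) (ha : 0 ≤ a) (hj : 0 ≤ j) (hjc : j ≤ c) :
    -((-(j*b))/c) ≤ (j*b + a*(c-j))/c + 1 := by
  have h1 : (j*b)/c + (-(j*b))/c ≥ -1 := by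
    have := ediv_superadd hc (j*b) (-(j*b))
    simp at this
    linarith
  have h2 : (j*b)/c ≤ (j*b + a*(c-j))/c :=
    Int.ediv_le_ediv hc (by nlinarith)
  linarith

lemma five_points_absurd {S : Set (Fin 2 → ℤ)} (x1 x2 x3 x4 x5 : Fin 2 → ℤ)
    (m1 : x1 ∈ S) (m2 : x2 ∈ S) (m3 : x3 ∈ S) (m4 : x4 ∈ S) (m5 : x5 ∈ S)
    (d12 : x1 ≠ x2) (d13 : x1 ≠ x3) (d14 : x1 ≠ x4) (d15 : x1 ≠ x5)
    (d23 : x2 ≠ x3) (d24 : x2 ≠ x4) (d25 : x2 ≠ x5)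
    (d34 : x3 ≠ x4) (d35 : x3 ≠ x5) (d45 : x4 ≠ x5)
    (h4 : S.ncard = 4) : False := by
  have hfin : S.Finite := by
    by_contra h
    have : S.Infinite := h
    rw [this.ncard] at h4
    omega
  have hsub : ({x1, x2, x3, x4, x5} : Set (Fin 2 → ℤ)) ⊆ S := by
    intro y hy
    rcases hy with rfl | rfl | rfl | rfl | rfl
    exacts [m1, m2, m3, m4, m5]
  have hcard : ({x1, x2, x3, x4, x5} : Set (Fin 2 → ℤ)).ncard = 5 := by
    rw [Set.ncard_insert_of_notMem (by simp [d12, d13, d14, d15]) (Set.toFinite _),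
      Set.ncard_insert_of_notMem (by simp [d23, d24, d25]) (Set.toFinite _),
      Set.ncard_insert_of_notMem (by simp [d34, d35]) (Set.toFinite _),
      Set.ncard_insert_of_notMem (by simp [d45]) (Set.toFinite _),
      Set.ncard_singleton]
  have := Set.ncard_le_ncard hsub hfin
  omega


open Matrix in
lemma mulVec_fin_two (a b c d : ℤ) (v : Fin 2 → ℤ) :
    (!![a, b; c, d]).mulVec v = ![a * v 0 + b * v 1, c * v 0 + d * v 1] := by
  funext i
  fin_cases i <;> simp [Matrix.mulVec, dotProduct, Fin.sum_univ_two, Matrix.vecHead, Matrix.vecTail]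

open Matrix in
lemma hermite (v w : Fin 2 → ℤ) (hd : 0 < v 0 * w 1 - v 1 * w 0) :
    ∃ (M : Matrix (Fin 2) (Fin 2) ℤ) (a b c : ℤ), M.det = 1 ∧ 1 ≤ a ∧ 0 < c ∧ 0 ≤ b ∧ b < c ∧
      M.mulVec v = ![a, 0] ∧ M.mulVec w = ![b, c] := by
  have hv : v 0 ≠ 0 ∨ v 1 ≠ 0 := by
    by_contra h
    push_neg at h
    rw [h.1, h.2] at hd
    simp at hd
  set g : ℤ := (Int.gcd (v 0) (v 1) : ℤ) with hg
  have hgpos : 0 < g := by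
    have := Int.gcd_pos_iff.mpr hv
    rw [hg]
    exact_mod_cast this
  obtain ⟨v0', e0⟩ : g ∣ v 0 := Int.gcd_dvd_left _ _
  obtain ⟨v1', e1⟩ : g ∣ v 1 := Int.gcd_dvd_right _ _
  set x := Int.gcdA (v 0) (v 1) with hx
  set y := Int.gcdB (v 0) (v 1) with hy
  have hbez : g = v 0 * x + v 1 * y := Int.gcd_eq_gcd_ab (v 0) (v 1)
  set M1 : Matrix (Fin 2) (Fin 2) ℤ := !![x, y; -v1', v0'] with hM1
  have hdet1 : M1.det = 1 := by
    rw [hM1, Matrix.det_fin_two_of]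
    rw [e0, e1] at hbez
    have : g * (x * v0' - y * -v1') = g * 1 := by linear_combination -hbez
    exact mul_left_cancel₀ hgpos.ne' this
  have hM1v : M1.mulVec v = ![g, 0] := by
    rw [hM1, mulVec_fin_two]
    have h2 : -v1' * v 0 + v0' * v 1 = 0 := by rw [e0, e1]; ring
    have h1 : x * v 0 + y * v 1 = g := by linear_combination hbez.symm
    rw [h1, h2]
  set b0 := x * w 0 + y * w 1 with hb0
  set c := -v1' * w 0 + v0' * w 1 with hc
  have hM1w : M1.mulVec w = ![b0, c] := by rw [hM1, mulVec_fin_two]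
  have hcpos : 0 < c := by
    have hgc : g * c = v 0 * w 1 - v 1 * w 0 := by rw [hc, e0, e1]; ring
    nlinarith [hgc, hgpos, hd]
  set k := -(b0 / c) with hk
  set M2 : Matrix (Fin 2) (Fin 2) ℤ := !![1, k; 0, 1] with hM2
  have hdet2 : M2.det = 1 := by rw [hM2, Matrix.det_fin_two_of]; ring
  refine ⟨M2 * M1, g, b0 % c, c, ?_, hgpos, hcpos, Int.emod_nonneg b0 hcpos.ne',
    Int.emod_lt_of_pos b0 hcpos, ?_, ?_⟩
  · rw [Matrix.det_mul, hdet1, hdet2, mul_one]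
  · rw [← Matrix.mulVec_mulVec, hM1v, hM2, mulVec_fin_two]
    norm_num
  · rw [← Matrix.mulVec_mulVec, hM1w, hM2, mulVec_fin_two]
    simp only [Matrix.cons_val_zero, Matrix.cons_val_one, Matrix.head_cons]
    funext i
    fin_cases i
    · show 1 * b0 + k * c = b0 % c
      rw [Int.emod_def, hk]; ring
    · show 0 * b0 + 1 * c = c
      ring

open Matrix in
lemma det_ne_zero_of_affineIndependent (p q r : Fin 2 → ℤ)
    (h : AffineIndependent ℝ ![toR2 p, toR2 q, toR2 r]) :
    (q 0 - p 0) * (r 1 - p 1) - (q 1 - p 1) * (r 0 - p 0) ≠ 0 := by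
  intro hzero
  rw [affineIndependent_iff_not_collinear_set] at h
  apply h
  set v : Fin 2 → ℤ := q - p with hv
  set w : Fin 2 → ℤ := r - p with hw
  have hv0 : v 0 = q 0 - p 0 := rfl
  have hv1 : v 1 = q 1 - p 1 := rfl
  have hw0 : w 0 = r 0 - p 0 := rfl
  have hw1 : w 1 = r 1 - p 1 := rfl
  have hz : v 0 * w 1 - v 1 * w 0 = 0 := by rw [hv0, hv1, hw0, hw1]; linarith
  -- find α β with α • v = β • w, not both zero
  by_cases hveq : v = 0
  · -- q = p
    have : toR2 q = toR2 p := by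
      have : q = p := by
        funext i; have := congrFun hveq i; simp [hv] at this; omega
      rw [this]
    rw [this]
    have : ({toR2 p, toR2 p, toR2 r} : Set (Fin 2 → ℝ)) = {toR2 p, toR2 r} := by
      simp [Set.insert_comm]
    rw [this]
    exact collinear_pair ℝ _ _
  by_cases hweq : w = 0
  · have : toR2 r = toR2 p := by
      have : r = p := by
        funext i; have := congrFun hweq i; simp [hw] at this; omega
      rw [this]
    rw [this]
    have : ({toR2 p, toR2 q, toR2 p} : Set (Fin 2 → ℝ)) = {toR2 p, toR2 q} := by
      ext z; simp; tauto
    rw [this]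
    exact collinear_pair ℝ _ _
  -- now pick α β
  have key : ∃ α β : ℤ, (α ≠ 0 ∧ β ≠ 0) ∧ α * v 0 = β * w 0 ∧ α * v 1 = β * w 1 := by
    by_cases h0 : v 0 ≠ 0
    · refine ⟨w 0, v 0, ⟨?_, h0⟩, by ring, by linear_combination -hz⟩
      intro hw0z
      -- if w 0 = 0 then v 0 * w 1 = 0 so w 1 = 0, contradicting w ≠ 0
      apply hweq
      have hw1z : w 1 = 0 := by
        have : v 0 * w 1 = 0 := by linear_combination hz + v 1 * hw0z
        rcases mul_eq_zero.mp this with h | h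
        · exact absurd h h0
        · exact h
      funext i; fin_cases i <;> simp [hw0z, hw1z]
    · push_neg at h0
      have h1 : v 1 ≠ 0 := by
        intro h1
        apply hveq
        funext i; fin_cases i <;> simp [h0, h1]
      refine ⟨w 1, v 1, ⟨?_, h1⟩, ?_, by ring⟩
      · intro hw1z
        apply hweq
        have hw0z : w 0 = 0 := by
          have : v 1 * w 0 = 0 := by linear_combination w 1 * h0 - hz
          rcases mul_eq_zero.mp this with h | h
          · exact absurd h h1
          · exact h
        funext i; fin_cases i <;> simp [hw0z, hw1z]
      · have : v 1 * w 0 = 0 := by linear_combination w 1 * h0 - hz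
        rcases mul_eq_zero.mp this with h | h
        · exact absurd h h1
        · rw [h0, h]; ring
  obtain ⟨α, β, ⟨hα, hβ⟩, k0, k1⟩ := key
  -- collinear with direction toR2 v
  rw [collinear_iff_of_mem (Set.mem_insert _ _)]
  refine ⟨toR2 v, ?_⟩
  intro z hz2
  rcases hz2 with rfl | rfl | rfl
  · exact ⟨0, by simp⟩
  · refine ⟨1, ?_⟩
    funext i
    have : q i = v i + p i := by simp [hv]
    simp [toR2, this]
  · refine ⟨(α : ℝ) / (β : ℝ), ?_⟩
    funext i
    have hri : r i = w i + p i := by simp [hw]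
    have hwv : (β : ℝ) * w i = (α : ℝ) * v i := by
      fin_cases i
      · exact_mod_cast (congrArg Int.cast k0.symm : ((β * w 0 : ℤ) : ℝ) = _)
      · exact_mod_cast (congrArg Int.cast k1.symm : ((β * w 1 : ℤ) : ℝ) = _)
    have hβR : (β : ℝ) ≠ 0 := Int.cast_ne_zero.mpr hβ
    simp only [toR2, Pi.add_apply, Pi.smul_apply, smul_eq_mul, vadd_eq_add]
    push_cast [hri]
    field_simp
    linarith [hwv]

lemma vec2_ne {m n m' n' : ℤ} (h : ¬(m = m' ∧ n = n')) : ![m, n] ≠ ![m', n'] :=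
  fun he => h ⟨congrFun he 0, congrFun he 1⟩

lemma vec2_eq_iff (x : Fin 2 → ℤ) (m n : ℤ) : x = ![m, n] ↔ x 0 = m ∧ x 1 = n := by
  constructor
  · intro h; exact ⟨congrFun h 0, congrFun h 1⟩
  · rintro ⟨h0, h1⟩; funext i; fin_cases i; exacts [h0, h1]

lemma latticePts_norm (a b c : ℤ) (ha : 0 < a) (hc : 0 < c) :
    latticePts (convexHull ℝ ({0, toR2 ![a, 0], toR2 ![b, c]} : Set (Fin 2 → ℝ))) =
      {x : Fin 2 → ℤ | 0 ≤ x 0 * c - x 1 * b ∧ 0 ≤ a * x 1 ∧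
        x 0 * c - x 1 * b + a * x 1 ≤ a * c} := by
  ext x
  have hd : 0 < (![a, 0] : Fin 2 → ℤ) 0 * (![b, c] : Fin 2 → ℤ) 1 -
      (![a, 0] : Fin 2 → ℤ) 1 * (![b, c] : Fin 2 → ℤ) 0 := by
    show 0 < a * c - 0 * b
    nlinarith
  have hiff := mem_hull_iff ![a, 0] ![b, c] hd x
  simp only [Matrix.cons_val_zero, Matrix.cons_val_one, Matrix.head_cons] at hiff
  constructor
  · intro hx
    obtain ⟨h1, h2, h3⟩ := hiff.mp hx
    exact ⟨by linarith, by linarith, by linarith⟩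
  · rintro ⟨h1, h2, h3⟩
    exact hiff.mpr ⟨by linarith, by linarith, by linarith⟩

lemma row_point {a b c j : ℤ} (hc : 0 < c) (ha : 0 ≤ a) (hj : 0 ≤ j)
    (hr : -((-(j*b))/c) ≤ (j*b + a*(c-j))/c) :
    ∃ x : Fin 2 → ℤ, (0 ≤ x 0 * c - x 1 * b ∧ 0 ≤ a * x 1 ∧
      x 0 * c - x 1 * b + a * x 1 ≤ a * c) ∧ x 1 = j := by
  refine ⟨![-((-(j*b))/c), j], ?_, rfl⟩
  have e0 : (![-((-(j*b))/c), j] : Fin 2 → ℤ) 0 = -((-(j*b))/c) := rfl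
  have e1 : (![-((-(j*b))/c), j] : Fin 2 → ℤ) 1 = j := rfl
  rw [e0, e1]
  have k1 : c * ((-(j*b))/c) ≤ -(j*b) := mul_ediv_self_le hc.ne'
  have k2 : c * ((j*b + a*(c-j))/c) ≤ j*b + a*(c-j) := mul_ediv_self_le hc.ne'
  have k3 : c * (-((-(j*b))/c)) ≤ c * ((j*b + a*(c-j))/c) :=
    mul_le_mul_of_nonneg_left hr hc.le
  refine ⟨by nlinarith, by nlinarith, by nlinarith⟩

lemma row_pair_exists {a b c j : ℤ} (hc : 0 < c) (ha : 1 ≤ a) (hj : 0 ≤ j) (hjc : j ≤ c) :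
    ∃ x : Fin 2 → ℤ, (0 ≤ x 0 * c - x 1 * b ∧ 0 ≤ a * x 1 ∧
      x 0 * c - x 1 * b + a * x 1 ≤ a * c) ∧ (x 1 = j ∨ x 1 = c - j) := by
  have hp := pairing a b c j hc
  have hn1 := r_nonneg (a := a) (b := b) hc (by linarith) hj hjc
  have hn2 := r_nonneg (a := a) (b := b) (j := c - j) hc (by linarith)
    (by linarith) (by linarith)
  rcases le_or_gt (-((-(j*b))/c)) ((j*b + a*(c-j))/c) with h | h
  · obtain ⟨x, hx, hx1⟩ := row_point hc (by linarith) hj h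
    exact ⟨x, hx, Or.inl hx1⟩
  · have h2 : -((-((c-j)*b))/c) ≤ ((c-j)*b + a*(c-(c-j)))/c := by
      have he : c - (c - j) = j := by ring
      rw [he]
      linarith
    obtain ⟨x, hx, hx1⟩ := row_point hc (by linarith) (by linarith) h2
    exact ⟨x, hx, Or.inr hx1⟩


open Matrix in
lemma hull_image (A : Matrix (Fin 2) (Fin 2) ℤ) (b : Fin 2 → ℤ) (p q r : Fin 2 → ℤ) :
    (fun x => (A.map (Int.cast : ℤ → ℝ)).mulVec x + toR2 b) ''
      (convexHull ℝ {toR2 p, toR2 q, toR2 r}) =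
      convexHull ℝ {toR2 (A.mulVec p + b), toR2 (A.mulVec q + b), toR2 (A.mulVec r + b)} := by
  have h : (fun x => (A.map (Int.cast : ℤ → ℝ)).mulVec x + toR2 b) = ⇑(affMap A b) := rfl
  rw [h, AffineMap.image_convexHull]
  congr 1
  simp only [Set.image_insert_eq, Set.image_singleton, affMap_apply, map_toR2]

lemma toR2_zero2 : toR2 ![0, 0] = 0 := by
  funext i; fin_cases i <;> simp [toR2]

open Matrix in
lemma mulVec_add_eval (a11 a12 a21 a22 u0 u1 b0 b1 : ℤ) :
    (!![a11, a12; a21, a22]).mulVec ![u0, u1] + ![b0, b1] =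
      ![a11 * u0 + a12 * u1 + b0, a21 * u0 + a22 * u1 + b1] := by
  rw [mulVec_fin_two]
  funext i
  fin_cases i <;> simp

lemma hA1 : IsUnit (!![1, 1; 0, 1] : Matrix (Fin 2) (Fin 2) ℤ).det := by
  rw [Matrix.det_fin_two_of]; exact Int.isUnit_iff.mpr (by norm_num)

lemma hA2 : IsUnit (!![2, -1; 1, 0] : Matrix (Fin 2) (Fin 2) ℤ).det := by
  rw [Matrix.det_fin_two_of]; exact Int.isUnit_iff.mpr (by norm_num)

open Matrix in
lemma him1 : (fun x => ((!![1, 1; 0, 1] : Matrix (Fin 2) (Fin 2) ℤ).map (Int.cast : ℤ → ℝ)).mulVec x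
      + toR2 ![-1, 0]) ''
    (convexHull ℝ ({0, toR2 ![2, 0], toR2 ![0, 1]} : Set (Fin 2 → ℝ))) = Tri1 := by
  have h := hull_image !![1, 1; 0, 1] ![-1, 0] ![0, 0] ![2, 0] ![0, 1]
  have e1 : (!![1, 1; 0, 1] : Matrix (Fin 2) (Fin 2) ℤ).mulVec ![0, 0] + ![-1, 0] = ![-1, 0] := by
    rw [mulVec_add_eval]; norm_num
  have e2 : (!![1, 1; 0, 1] : Matrix (Fin 2) (Fin 2) ℤ).mulVec ![2, 0] + ![-1, 0] = ![1, 0] := by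
    rw [mulVec_add_eval]; norm_num
  have e3 : (!![1, 1; 0, 1] : Matrix (Fin 2) (Fin 2) ℤ).mulVec ![0, 1] + ![-1, 0] = ![0, 1] := by
    rw [mulVec_add_eval]; norm_num
  rw [e1, e2, e3, toR2_zero2] at h
  rw [h, Tri1]
  congr 1
  ext z
  simp only [Set.mem_insert_iff, Set.mem_singleton_iff]
  tauto

open Matrix in
lemma him2 : (fun x => ((!![2, -1; 1, 0] : Matrix (Fin 2) (Fin 2) ℤ).map (Int.cast : ℤ → ℝ)).mulVec x
      + toR2 ![-1, -1]) ''
    (convexHull ℝ ({0, toR2 ![1, 0], toR2 ![2, 3]} : Set (Fin 2 → ℝ))) = Tri2 := by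
  have h := hull_image !![2, -1; 1, 0] ![-1, -1] ![0, 0] ![1, 0] ![2, 3]
  have e1 : (!![2, -1; 1, 0] : Matrix (Fin 2) (Fin 2) ℤ).mulVec ![0, 0] + ![-1, -1] = ![-1, -1] := by
    rw [mulVec_add_eval]; norm_num
  have e2 : (!![2, -1; 1, 0] : Matrix (Fin 2) (Fin 2) ℤ).mulVec ![1, 0] + ![-1, -1] = ![1, 0] := by
    rw [mulVec_add_eval]; norm_num
  have e3 : (!![2, -1; 1, 0] : Matrix (Fin 2) (Fin 2) ℤ).mulVec ![2, 3] + ![-1, -1] = ![0, 1] := by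
    rw [mulVec_add_eval]; norm_num
  rw [e1, e2, e3, toR2_zero2] at h
  rw [h, Tri2]
  congr 1
  ext z
  simp only [Set.mem_insert_iff, Set.mem_singleton_iff]
  tauto

lemma equiv_norm1_tri1 :
    UnimodEquiv (convexHull ℝ ({0, toR2 ![2, 0], toR2 ![0, 1]} : Set (Fin 2 → ℝ))) Tri1 :=
  ⟨_, _, hA1, him1⟩

lemma equiv_norm2_tri2 :
    UnimodEquiv (convexHull ℝ ({0, toR2 ![1, 0], toR2 ![2, 3]} : Set (Fin 2 → ℝ))) Tri2 :=
  ⟨_, _, hA2, him2⟩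

lemma hlat_norm_21 : latticePts (convexHull ℝ ({0, toR2 ![2, 0], toR2 ![0, 1]} : Set (Fin 2 → ℝ)))
    = {![0, 0], ![1, 0], ![2, 0], ![0, 1]} := by
  rw [latticePts_norm 2 0 1 (by norm_num) (by norm_num)]
  ext x
  simp only [Set.mem_setOf_eq, Set.mem_insert_iff, Set.mem_singleton_iff, vec2_eq_iff]
  omega

lemma hlat_norm_123 : latticePts (convexHull ℝ ({0, toR2 ![1, 0], toR2 ![2, 3]} : Set (Fin 2 → ℝ)))
    = {![0, 0], ![1, 0], ![1, 1], ![2, 3]} := by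
  rw [latticePts_norm 1 2 3 (by norm_num) (by norm_num)]
  ext x
  simp only [Set.mem_setOf_eq, Set.mem_insert_iff, Set.mem_singleton_iff, vec2_eq_iff]
  omega

lemma ncard_four (x1 x2 x3 x4 : Fin 2 → ℤ) (d12 : x1 ≠ x2) (d13 : x1 ≠ x3) (d14 : x1 ≠ x4)
    (d23 : x2 ≠ x3) (d24 : x2 ≠ x4) (d34 : x3 ≠ x4) :
    ({x1, x2, x3, x4} : Set (Fin 2 → ℤ)).ncard = 4 := by
  rw [Set.ncard_insert_of_notMem (by simp [d12, d13, d14]) (Set.toFinite _),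
    Set.ncard_insert_of_notMem (by simp [d23, d24]) (Set.toFinite _),
    Set.ncard_insert_of_notMem (by simp [d34]) (Set.toFinite _),
    Set.ncard_singleton]

lemma hcnt_norm_21 : (latticePts (convexHull ℝ
    ({0, toR2 ![2, 0], toR2 ![0, 1]} : Set (Fin 2 → ℝ)))).ncard = 4 := by
  rw [hlat_norm_21]
  exact ncard_four _ _ _ _ (vec2_ne (by norm_num)) (vec2_ne (by norm_num))
    (vec2_ne (by norm_num)) (vec2_ne (by norm_num)) (vec2_ne (by norm_num))
    (vec2_ne (by norm_num))

lemma hcnt_norm_123 : (latticePts (convexHull ℝ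
    ({0, toR2 ![1, 0], toR2 ![2, 3]} : Set (Fin 2 → ℝ)))).ncard = 4 := by
  rw [hlat_norm_123]
  exact ncard_four _ _ _ _ (vec2_ne (by norm_num)) (vec2_ne (by norm_num))
    (vec2_ne (by norm_num)) (vec2_ne (by norm_num)) (vec2_ne (by norm_num))
    (vec2_ne (by norm_num))

lemma hcnt1 : (latticePts Tri1).ncard = 4 := by
  rw [← ncard_latticePts_eq equiv_norm1_tri1]
  exact hcnt_norm_21

lemma hcnt2 : (latticePts Tri2).ncard = 4 := by
  rw [← ncard_latticePts_eq equiv_norm2_tri2]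
  exact hcnt_norm_123

open Matrix in
lemma hlat1 : latticePts Tri1 = {![-1, 0], ![0, 0], ![1, 0], ![0, 1]} := by
  rw [latticePts_image _ _ hA1 him1, hlat_norm_21]
  simp only [Set.image_insert_eq, Set.image_singleton]
  rw [show (!![1, 1; 0, 1] : Matrix (Fin 2) (Fin 2) ℤ).mulVec ![0, 0] + ![-1, 0] = ![-1, 0] by
      rw [mulVec_add_eval]; norm_num,
    show (!![1, 1; 0, 1] : Matrix (Fin 2) (Fin 2) ℤ).mulVec ![1, 0] + ![-1, 0] = ![0, 0] by
      rw [mulVec_add_eval]; norm_num,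
    show (!![1, 1; 0, 1] : Matrix (Fin 2) (Fin 2) ℤ).mulVec ![2, 0] + ![-1, 0] = ![1, 0] by
      rw [mulVec_add_eval]; norm_num,
    show (!![1, 1; 0, 1] : Matrix (Fin 2) (Fin 2) ℤ).mulVec ![0, 1] + ![-1, 0] = ![0, 1] by
      rw [mulVec_add_eval]; norm_num]

open Matrix in
lemma hlat2 : latticePts Tri2 = {![-1, -1], ![1, 0], ![0, 0], ![0, 1]} := by
  rw [latticePts_image _ _ hA2 him2, hlat_norm_123]
  simp only [Set.image_insert_eq, Set.image_singleton]
  rw [show (!![2, -1; 1, 0] : Matrix (Fin 2) (Fin 2) ℤ).mulVec ![0, 0] + ![-1, -1] = ![-1, -1] by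
      rw [mulVec_add_eval]; norm_num,
    show (!![2, -1; 1, 0] : Matrix (Fin 2) (Fin 2) ℤ).mulVec ![1, 0] + ![-1, -1] = ![1, 0] by
      rw [mulVec_add_eval]; norm_num,
    show (!![2, -1; 1, 0] : Matrix (Fin 2) (Fin 2) ℤ).mulVec ![1, 1] + ![-1, -1] = ![0, 0] by
      rw [mulVec_add_eval]; norm_num,
    show (!![2, -1; 1, 0] : Matrix (Fin 2) (Fin 2) ℤ).mulVec ![2, 3] + ![-1, -1] = ![0, 1] by
      rw [mulVec_add_eval]; norm_num]

open Matrix in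
lemma not_equiv_tri1_tri2 : ¬ UnimodEquiv Tri1 Tri2 := by
  rintro ⟨A, b, hA, him⟩
  have hli := latticePts_image A b hA him
  have hinj := mulVec_add_injective A b hA
  have h1 : (![1, 0] : Fin 2 → ℤ) ∈ latticePts Tri1 := by
    rw [hlat1]; right; right; left; rfl
  have h2 : (![-1, 0] : Fin 2 → ℤ) ∈ latticePts Tri1 := by
    rw [hlat1]; left; rfl
  have h3 : (![0, 0] : Fin 2 → ℤ) ∈ latticePts Tri1 := by
    rw [hlat1]; right; left; rfl
  have m1 : A.mulVec ![1, 0] + b ∈ latticePts Tri2 := by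
    rw [hli]; exact Set.mem_image_of_mem _ h1
  have m2 : A.mulVec ![-1, 0] + b ∈ latticePts Tri2 := by
    rw [hli]; exact Set.mem_image_of_mem _ h2
  have m3 : A.mulVec ![0, 0] + b ∈ latticePts Tri2 := by
    rw [hli]; exact Set.mem_image_of_mem _ h3
  set u := A.mulVec ![1, 0] + b with hu
  set v := A.mulVec ![-1, 0] + b with hv
  set m := A.mulVec ![0, 0] + b with hm
  have hsum : u + v = m + m := by
    rw [hu, hv, hm]
    have hvec : (![1, 0] : Fin 2 → ℤ) + ![-1, 0] = ![0, 0] + ![0, 0] := by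
      funext i; fin_cases i <;> norm_num
    have : A.mulVec ![1, 0] + A.mulVec ![-1, 0] = A.mulVec ![0, 0] + A.mulVec ![0, 0] := by
      rw [← Matrix.mulVec_add, ← Matrix.mulVec_add, hvec]
    calc A.mulVec ![1, 0] + b + (A.mulVec ![-1, 0] + b)
        = (A.mulVec ![1, 0] + A.mulVec ![-1, 0]) + (b + b) := by abel
      _ = (A.mulVec ![0, 0] + A.mulVec ![0, 0]) + (b + b) := by rw [this]
      _ = A.mulVec ![0, 0] + b + (A.mulVec ![0, 0] + b) := by abel
  have huv : u ≠ v := by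
    rw [hu, hv]
    intro h
    have := hinj h
    have := congrFun this 0
    norm_num at this
  have hum : u ≠ m := by
    rw [hu, hm]
    intro h
    have := hinj h
    have := congrFun this 0
    norm_num at this
  have hvm : v ≠ m := by
    rw [hv, hm]
    intro h
    have := hinj h
    have := congrFun this 0
    norm_num at this
  simp only [hlat2, Set.mem_insert_iff, Set.mem_singleton_iff, vec2_eq_iff] at m1 m2 m3
  have hs0 : u 0 + v 0 = m 0 + m 0 := by
    have := congrFun hsum 0; simpa using this
  have hs1 : u 1 + v 1 = m 1 + m 1 := by
    have := congrFun hsum 1; simpa using this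
  have huv' : ¬(u 0 = v 0 ∧ u 1 = v 1) := by
    rintro ⟨e0, e1⟩
    exact huv (by funext i; fin_cases i; exacts [e0, e1])
  have hum' : ¬(u 0 = m 0 ∧ u 1 = m 1) := by
    rintro ⟨e0, e1⟩
    exact hum (by funext i; fin_cases i; exacts [e0, e1])
  have hvm' : ¬(v 0 = m 0 ∧ v 1 = m 1) := by
    rintro ⟨e0, e1⟩
    exact hvm (by funext i; fin_cases i; exacts [e0, e1])
  omega


lemma ncard_three (x1 x2 x3 : Fin 2 → ℤ) (d12 : x1 ≠ x2) (d13 : x1 ≠ x3) (d23 : x2 ≠ x3) :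
    ({x1, x2, x3} : Set (Fin 2 → ℤ)).ncard = 3 := by
  rw [Set.ncard_insert_of_notMem (by simp [d12, d13]) (Set.toFinite _),
    Set.ncard_insert_of_notMem (by simp [d23]) (Set.toFinite _),
    Set.ncard_singleton]

lemma toR2_zero : toR2 (0 : Fin 2 → ℤ) = 0 := by funext i; simp [toR2]

open Matrix in
lemma unimod_zero_hull (A : Matrix (Fin 2) (Fin 2) ℤ) (bb q r u1 u2 u3 : Fin 2 → ℤ)
    (hA : IsUnit A.det)
    (e1 : A.mulVec ![0, 0] + bb = u1) (e2 : A.mulVec q + bb = u2)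
    (e3 : A.mulVec r + bb = u3) :
    UnimodEquiv (convexHull ℝ ({0, toR2 q, toR2 r} : Set (Fin 2 → ℝ)))
      (convexHull ℝ {toR2 u1, toR2 u2, toR2 u3}) := by
  have h := unimodEquiv_hull A bb hA ![0, 0] q r
  rw [e1, e2, e3, toR2_zero2] at h
  exact h

set_option maxHeartbeats 1000000 in
open Matrix in
lemma main_pos (p q r : Fin 2 → ℤ)
    (hd : 0 < (q 0 - p 0) * (r 1 - p 1) - (q 1 - p 1) * (r 0 - p 0))
    (hcard : (latticePts (convexHull ℝ {toR2 p, toR2 q, toR2 r})).ncard = 4) :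
    UnimodEquiv (convexHull ℝ {toR2 p, toR2 q, toR2 r}) Tri1 ∨
    UnimodEquiv (convexHull ℝ {toR2 p, toR2 q, toR2 r}) Tri2 := by
  have hd' : 0 < (q - p) 0 * (r - p) 1 - (q - p) 1 * (r - p) 0 := by
    simpa [Pi.sub_apply] using hd
  obtain ⟨M, a, b, c, hdet, ha, hc, hb0, hbc, hMv, hMw⟩ := hermite (q - p) (r - p) hd'
  have hunit : IsUnit M.det := by rw [hdet]; exact isUnit_one
  have E0 := unimodEquiv_hull M (-(M.mulVec p)) hunit p q r
  have e1 : M.mulVec p + -(M.mulVec p) = 0 := by abel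
  have e2 : M.mulVec q + -(M.mulVec p) = ![a, 0] := by
    have h2 : M.mulVec q + -(M.mulVec p) = M.mulVec (q - p) := by
      rw [Matrix.mulVec_sub]; abel
    rw [h2, hMv]
  have e3 : M.mulVec r + -(M.mulVec p) = ![b, c] := by
    have h2 : M.mulVec r + -(M.mulVec p) = M.mulVec (r - p) := by
      rw [Matrix.mulVec_sub]; abel
    rw [h2, hMw]
  rw [e1, e2, e3, toR2_zero] at E0
  have hcard2 : (latticePts (convexHull ℝ
      ({0, toR2 ![a, 0], toR2 ![b, c]} : Set (Fin 2 → ℝ)))).ncard = 4 := by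
    rw [← ncard_latticePts_eq E0]; exact hcard
  rw [latticePts_norm a b c (by linarith) hc] at hcard2
  -- a ≤ 2
  have hA2 : a ≤ 2 := by
    by_contra hA
    push_neg at hA
    refine five_points_absurd (S := {z : Fin 2 → ℤ | 0 ≤ z 0 * c - z 1 * b ∧ 0 ≤ a * z 1 ∧
        z 0 * c - z 1 * b + a * z 1 ≤ a * c}) ![0, 0] ![1, 0] ![2, 0] ![3, 0] ![b, c]
      ?_ ?_ ?_ ?_ ?_
      (vec2_ne (by norm_num)) (vec2_ne (by norm_num)) (vec2_ne (by norm_num))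
      (vec2_ne (by clear hcard2 hcard E0; omega)) (vec2_ne (by norm_num)) (vec2_ne (by norm_num))
      (vec2_ne (by clear hcard2 hcard E0; omega)) (vec2_ne (by norm_num)) (vec2_ne (by clear hcard2 hcard E0; omega))
      (vec2_ne (by clear hcard2 hcard E0; omega)) hcard2 <;>
    · clear hcard2 hcard E0 hMv hMw
      simp only [Set.mem_setOf_eq, Matrix.cons_val_zero, Matrix.cons_val_one, Matrix.head_cons]
      refine ⟨by nlinarith, by nlinarith, by nlinarith⟩
  interval_cases a
  · -- a = 1
    have hc3 : c ≤ 3 := by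
      by_contra hcc
      push_neg at hcc
      obtain ⟨P1, hxS, hx1⟩ := row_pair_exists (a := 1) (b := b) (j := 1) hc le_rfl
        (by norm_num) (by clear hcard2 hcard E0; omega)
      obtain ⟨P2, hyS, hy1⟩ := row_pair_exists (a := 1) (b := b) (j := 2) hc le_rfl
        (by norm_num) (by clear hcard2 hcard E0; omega)
      refine five_points_absurd (S := {z : Fin 2 → ℤ | 0 ≤ z 0 * c - z 1 * b ∧ 0 ≤ 1 * z 1 ∧
          z 0 * c - z 1 * b + 1 * z 1 ≤ 1 * c}) ![0, 0] ![1, 0] ![b, c] P1 P2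
        ?_ ?_ ?_ hxS hyS
        (vec2_ne (by norm_num)) (vec2_ne (by clear hcard2 hcard E0; omega))
        (by intro h; have h1 := congrFun h.symm 1; simp at h1; clear hcard2 hcard E0; omega)
        (by intro h; have h1 := congrFun h.symm 1; simp at h1; clear hcard2 hcard E0; omega)
        (vec2_ne (by clear hcard2 hcard E0; omega))
        (by intro h; have h1 := congrFun h.symm 1; simp at h1; clear hcard2 hcard E0; omega)
        (by intro h; have h1 := congrFun h.symm 1; simp at h1; clear hcard2 hcard E0; omega)
        (by intro h; have h1 := congrFun h.symm 1; simp at h1; clear hcard2 hcard E0; omega)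
        (by intro h; have h1 := congrFun h.symm 1; simp at h1; clear hcard2 hcard E0; omega)
        (by intro h; have h1 := congrFun h 1; clear hcard2 hcard E0; omega)
        hcard2 <;>
      · clear hcard2 hcard E0 hMv hMw
        simp only [Set.mem_setOf_eq, Matrix.cons_val_zero, Matrix.cons_val_one, Matrix.head_cons]
        refine ⟨by nlinarith, by nlinarith, by nlinarith⟩
    interval_cases c
    · -- c = 1, b = 0 : only 3 lattice points, contradiction
      have hb : b = 0 := by clear hcard2 hcard E0; omega
      subst hb
      have hset : ({x : Fin 2 → ℤ | 0 ≤ x 0 * 1 - x 1 * 0 ∧ 0 ≤ 1 * x 1 ∧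
          x 0 * 1 - x 1 * 0 + 1 * x 1 ≤ 1 * 1} : Set (Fin 2 → ℤ)) =
          {![0, 0], ![1, 0], ![0, 1]} := by
        ext x
        simp only [Set.mem_setOf_eq, Set.mem_insert_iff, Set.mem_singleton_iff, vec2_eq_iff]
        clear hcard2 hcard E0
        omega
      rw [hset, ncard_three _ _ _ (vec2_ne (by norm_num)) (vec2_ne (by norm_num))
        (vec2_ne (by norm_num))] at hcard2
      exact absurd hcard2 (by norm_num)
    · -- c = 2
      interval_cases b
      · -- (1,0,2) ≅ Tri1
        left
        refine unimodEquiv_trans E0 ?_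
        have h := unimod_zero_hull !![-1, -1; 1, 0] ![1, 0] ![1, 0] ![0, 2]
          ![1, 0] ![0, 1] ![-1, 0]
          (by rw [Matrix.det_fin_two_of]; exact Int.isUnit_iff.mpr (by norm_num))
          (by rw [mulVec_add_eval]; norm_num) (by rw [mulVec_add_eval]; norm_num)
          (by rw [mulVec_add_eval]; norm_num)
        exact h
      · -- (1,1,2) ≅ Tri1
        left
        refine unimodEquiv_trans E0 ?_
        have h := unimod_zero_hull !![1, -1; -1, 0] ![0, 1] ![1, 0] ![1, 2]
          ![0, 1] ![1, 0] ![-1, 0]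
          (by rw [Matrix.det_fin_two_of]; exact Int.isUnit_iff.mpr (by norm_num))
          (by rw [mulVec_add_eval]; norm_num) (by rw [mulVec_add_eval]; norm_num)
          (by rw [mulVec_add_eval]; norm_num)
        rw [Set.insert_comm (toR2 ![0, 1]) (toR2 ![1, 0])] at h
        exact h
    · -- c = 3
      interval_cases b
      · -- (1,0,3): 5 lattice points, contradiction
        exfalso
        refine five_points_absurd (S := {z : Fin 2 → ℤ | 0 ≤ z 0 * 3 - z 1 * 0 ∧ 0 ≤ 1 * z 1 ∧
            z 0 * 3 - z 1 * 0 + 1 * z 1 ≤ 1 * 3}) ![0, 0] ![0, 1] ![0, 2] ![0, 3] ![1, 0]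
          ?_ ?_ ?_ ?_ ?_
          (vec2_ne (by norm_num)) (vec2_ne (by norm_num)) (vec2_ne (by norm_num))
          (vec2_ne (by norm_num)) (vec2_ne (by norm_num)) (vec2_ne (by norm_num))
          (vec2_ne (by norm_num)) (vec2_ne (by norm_num)) (vec2_ne (by norm_num))
          (vec2_ne (by norm_num)) hcard2 <;>
        · clear hcard2 hcard E0 hMv hMw
          simp only [Set.mem_setOf_eq, Matrix.cons_val_zero, Matrix.cons_val_one,
            Matrix.head_cons]
          omega
      · -- (1,1,3): 5 lattice points, contradiction
        exfalso
        refine five_points_absurd (S := {z : Fin 2 → ℤ | 0 ≤ z 0 * 3 - z 1 * 1 ∧ 0 ≤ 1 * z 1 ∧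
            z 0 * 3 - z 1 * 1 + 1 * z 1 ≤ 1 * 3}) ![0, 0] ![1, 0] ![1, 1] ![1, 2] ![1, 3]
          ?_ ?_ ?_ ?_ ?_
          (vec2_ne (by norm_num)) (vec2_ne (by norm_num)) (vec2_ne (by norm_num))
          (vec2_ne (by norm_num)) (vec2_ne (by norm_num)) (vec2_ne (by norm_num))
          (vec2_ne (by norm_num)) (vec2_ne (by norm_num)) (vec2_ne (by norm_num))
          (vec2_ne (by norm_num)) hcard2 <;>
        · clear hcard2 hcard E0 hMv hMw
          simp only [Set.mem_setOf_eq, Matrix.cons_val_zero, Matrix.cons_val_one,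
            Matrix.head_cons]
          omega
      · -- (1,2,3) ≅ Tri2
        right
        exact unimodEquiv_trans E0 equiv_norm2_tri2
  · -- a = 2
    have hc1 : c = 1 := by
      by_contra hcc
      have hc2 : 2 ≤ c := by clear hcard2 hcard E0; omega
      obtain ⟨P1, hxS, hx1⟩ := row_pair_exists (a := 2) (b := b) (j := 1) hc (by norm_num)
        (by norm_num) (by clear hcard2 hcard E0; omega)
      refine five_points_absurd (S := {z : Fin 2 → ℤ | 0 ≤ z 0 * c - z 1 * b ∧ 0 ≤ 2 * z 1 ∧
          z 0 * c - z 1 * b + 2 * z 1 ≤ 2 * c}) ![0, 0] ![1, 0] ![2, 0] ![b, c] P1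
        ?_ ?_ ?_ ?_ hxS
        (vec2_ne (by norm_num)) (vec2_ne (by norm_num)) (vec2_ne (by clear hcard2 hcard E0; omega))
        (by intro h; have h1 := congrFun h.symm 1; simp at h1; clear hcard2 hcard E0; omega)
        (vec2_ne (by norm_num)) (vec2_ne (by clear hcard2 hcard E0; omega))
        (by intro h; have h1 := congrFun h.symm 1; simp at h1; clear hcard2 hcard E0; omega)
        (vec2_ne (by clear hcard2 hcard E0; omega))
        (by intro h; have h1 := congrFun h.symm 1; simp at h1; clear hcard2 hcard E0; omega)
        (by intro h; have h1 := congrFun h.symm 1; simp at h1; clear hcard2 hcard E0; omega)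
        hcard2 <;>
      · clear hcard2 hcard E0 hMv hMw
        simp only [Set.mem_setOf_eq, Matrix.cons_val_zero, Matrix.cons_val_one, Matrix.head_cons]
        refine ⟨by nlinarith, by nlinarith, by nlinarith⟩
    subst hc1
    have hb : b = 0 := by clear hcard2 hcard E0; omega
    subst hb
    left
    exact unimodEquiv_trans E0 equiv_norm1_tri1


/-- Up to unimodular equivalence there are exactly two lattice triangles with exactly
four lattice points, namely `Tri1` and `Tri2`. -/
theorem four_point_lattice_triangles_classification :
    (Set.ncard (latticePts Tri1) = 4) ∧ (Set.ncard (latticePts Tri2) = 4) ∧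
    ¬ UnimodEquiv Tri1 Tri2 ∧
    ∀ p q r : Fin 2 → ℤ, AffineIndependent ℝ ![toR2 p, toR2 q, toR2 r] →
      Set.ncard (latticePts (convexHull ℝ {toR2 p, toR2 q, toR2 r})) = 4 →
      UnimodEquiv (convexHull ℝ {toR2 p, toR2 q, toR2 r}) Tri1 ∨
      UnimodEquiv (convexHull ℝ {toR2 p, toR2 q, toR2 r}) Tri2 := by
  refine ⟨hcnt1, hcnt2, not_equiv_tri1_tri2, ?_⟩
  intro p q r hInd hcard
  have hdet := det_ne_zero_of_affineIndependent p q r hInd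
  rcases lt_or_gt_of_ne hdet with hneg | hpos
  · have hring : (r 0 - p 0) * (q 1 - p 1) - (r 1 - p 1) * (q 0 - p 0) =
        -((q 0 - p 0) * (r 1 - p 1) - (q 1 - p 1) * (r 0 - p 0)) := by ring
    have hpos' : 0 < (r 0 - p 0) * (q 1 - p 1) - (r 1 - p 1) * (q 0 - p 0) := by
      rw [hring]; linarith
    have hsets : ({toR2 p, toR2 q, toR2 r} : Set (Fin 2 → ℝ)) = {toR2 p, toR2 r, toR2 q} := by
      rw [Set.pair_comm (toR2 q) (toR2 r)]
    rw [hsets] at hcard ⊢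
    exact main_pos p r q hpos' hcard
  · exact main_pos p q r hpos hcard
end

section
/- Let $P \subset \mathbb{R}^d$ be a lattice polytope, $v \in \mathbb{Z}^d$ a column vector for $P$ with base facet $P_v$, and let $S_P \subset \mathbb{Z}^{d+1}$ be the semigroup generated by $\{(x,1) : x \in P \cap \mathbb{Z}^d\}$. For $x \in S_P$ define $\mathrm{ht}_v(x)$ to be the largest nonnegative integer $m$ with $x + m(v,0) \in S_P$. Then for every $x \in S_P$, the element $x + \mathrm{ht}_v(x) \cdot (v,0)$ belongs to $S_{P_v}$, the subsemigroup generated by $\{(y,1) : y \in P_v \cap \mathbb{Z}^d\}$. -/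
/-- For a column structure `(P, v)` with base facet `P_v`, any element of `S_P` moved up to its
full height in direction `v` lands in the subsemigroup `S_{P_v}`. The polytope `P` is the convex
hull of a finite set of lattice points, the facet `P_v` is cut out by a supporting affine
functional `φ`, and `S_P ⊂ ℤ^d × ℤ` is the monoid generated by `{(x,1) : x ∈ P ∩ ℤ^d}`. -/
theorem height_moves_into_base_facet_semigroup
    (d : ℕ) (V : Finset (Fin d → ℤ)) (P : Set (Fin d → ℝ))
    (hP : P = convexHull ℝ ((fun w : Fin d → ℤ => fun i => (w i : ℝ)) '' (V : Set (Fin d → ℤ))))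
    (v : Fin d → ℤ) (hv : v ≠ 0)
    (φ : (Fin d → ℝ) →ᵃ[ℝ] ℝ) (hφ : ∀ p ∈ P, 0 ≤ φ p)
    (Pv : Set (Fin d → ℝ)) (hPv : Pv = {p ∈ P | φ p = 0}) (hPvne : Pv.Nonempty)
    (hcol : ∀ x : Fin d → ℤ, (fun i => (x i : ℝ)) ∈ P → (fun i => (x i : ℝ)) ∉ Pv →
      (fun i => ((x + v) i : ℝ)) ∈ P)
    (SP SPv : AddSubmonoid ((Fin d → ℤ) × ℤ))
    (hSP : SP = AddSubmonoid.closure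
      {p | ∃ x : Fin d → ℤ, (fun i => (x i : ℝ)) ∈ P ∧ p = (x, 1)})
    (hSPv : SPv = AddSubmonoid.closure
      {p | ∃ x : Fin d → ℤ, (fun i => (x i : ℝ)) ∈ Pv ∧ p = (x, 1)}) :
    ∀ a ∈ SP, ∀ m : ℕ,
      a + m • ((v, 0) : (Fin d → ℤ) × ℤ) ∈ SP →
      a + (m + 1) • ((v, 0) : (Fin d → ℤ) × ℤ) ∉ SP →
      a + m • ((v, 0) : (Fin d → ℤ) × ℤ) ∈ SPv := by
  intro a ha m hm hnot
  set w : (Fin d → ℤ) × ℤ := (v, 0) with hw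
  have key : ∀ b ∈ SP, b + w ∉ SP → b ∈ SPv := by
    intro b hb
    rw [hSP] at hb
    induction hb using AddSubmonoid.closure_induction with
    | mem x hx =>
      intro hnx
      obtain ⟨y, hyP, rfl⟩ := hx
      by_cases hy : (fun i => (y i : ℝ)) ∈ Pv
      · rw [hSPv]
        exact AddSubmonoid.subset_closure ⟨y, hy, rfl⟩
      · exfalso
        apply hnx
        rw [hSP]
        have : ((y, 1) : (Fin d → ℤ) × ℤ) + w = (y + v, 1) := by
          simp [hw, Prod.ext_iff]
        rw [this]
        exact AddSubmonoid.subset_closure ⟨y + v, hcol y hyP hy, rfl⟩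
    | zero => intro _; exact zero_mem SPv
    | add x y hx hy ihx ihy =>
      intro hnxy
      rw [← hSP] at hx hy
      have hx' : x + w ∉ SP := fun h => hnxy (by
        have : x + y + w = (x + w) + y := by ring
        rw [this]; exact add_mem h hy)
      have hy' : y + w ∉ SP := fun h => hnxy (by
        have : x + y + w = x + (y + w) := by ring
        rw [this]; exact add_mem hx h)
      exact add_mem (ihx hx') (ihy hy')
  apply key _ hm
  intro h
  apply hnot
  have : a + (m + 1) • w = a + m • w + w := by rw [succ_nsmul]; ring
  rwa [this]
end

section
/- Let $k$ be a field and let $S$ be a free commutative monoid (e.g., the multiplicative monoid $(k[X_1,\dots,X_r]\setminus\{0\})/k^*$ of nonzero polynomials up to scalar, which is free on the irreducible polynomials). Suppose elements $\phi_x \in S$ indexed by the lattice points $x$ of $c\Delta_n$ satisfy $\phi_x + \phi_y = \phi_{x'} + \phi_{y'}$ (written additively) whenever $x + y = x' + y'$ for lattice points $x, y, x', y' \in c\Delta_n$. Then there exist elements $\psi, \eta_0, \dots, \eta_n \in S$ such that $\phi_x = \psi + a_0\eta_0 + a_1\eta_1 + \cdots + a_n\eta_n$ for every lattice point $x$ of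 $c\Delta_n$ with barycentric coordinates $(a_0, \dots, a_n)$. -/
open Finset


private def simplexMove {c n : ℕ} (j j' : Fin (n + 1)) (hjj' : j ≠ j')
    (p : {a : Fin (n + 1) → ℕ // (∑ i, a i) = c}) (hp : p.1 j' ≠ 0) :
    {a : Fin (n + 1) → ℕ // (∑ i, a i) = c} :=
  ⟨fun t => if t = j then p.1 t + 1 else if t = j' then p.1 t - 1 else p.1 t, by
    show ∑ t : Fin (n+1), (if t = j then p.1 t + 1 else if t = j' then p.1 t - 1 else p.1 t) = c
    have h1 : ∀ t, (if t = j then p.1 t + 1 else if t = j' then p.1 t - 1 else p.1 t)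
        + (if t = j' then 1 else 0) = p.1 t + (if t = j then 1 else 0) := by
      intro t
      by_cases h : t = j
      · subst h; simp [if_neg hjj']
      · by_cases h' : t = j'
        · subst h'; simp [h]; omega
        · simp [h, h']
    have h2 : ∑ t, ((if t = j then p.1 t + 1 else if t = j' then p.1 t - 1 else p.1 t)
        + (if t = j' then 1 else 0)) = ∑ t, (p.1 t + (if t = j then 1 else 0)) :=
      Finset.sum_congr rfl (fun t _ => h1 t)
    rw [Finset.sum_add_distrib, Finset.sum_add_distrib] at h2
    simp only [Finset.sum_ite_eq', Finset.mem_univ, if_true] at h2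
    have := p.2
    omega⟩

private lemma key_multiset {c n : ℕ} {M : Type*} [AddCommMonoid M]
    (f : {a : Fin (n + 1) → ℕ // (∑ i, a i) = c} → M)
    (hrel : ∀ a b a' b' : {a : Fin (n + 1) → ℕ // (∑ i, a i) = c},
      (∀ j : Fin n, a.1 j.succ + b.1 j.succ = a'.1 j.succ + b'.1 j.succ) →
      f a + f b = f a' + f b') :
    ∀ (k : ℕ) (L R : Multiset {a : Fin (n + 1) → ℕ // (∑ i, a i) = c}),
      Multiset.card L = k → Multiset.card R = k →
      (∀ j, (L.map fun p => p.1 j).sum = (R.map fun p => p.1 j).sum) →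
      (L.map f).sum = (R.map f).sum := by
  intro k
  induction k with
  | zero =>
    intro L R hL hR _
    rw [Multiset.card_eq_zero] at hL hR
    subst hL; subst hR; rfl
  | succ k ih =>
    intro L R hL hR hsums
    -- L is nonempty
    obtain ⟨a, L₀, rfl⟩ : ∃ a L₀, L = a ::ₘ L₀ := by
      rcases Multiset.card_pos_iff_exists_mem.1 (by omega : 0 < Multiset.card L) with ⟨a, ha⟩
      exact ⟨a, _, (Multiset.cons_erase ha).symm⟩
    obtain ⟨b, R₀, rfl⟩ : ∃ b R₀, R = b ::ₘ R₀ := by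
      rcases Multiset.card_pos_iff_exists_mem.1 (by omega : 0 < Multiset.card R) with ⟨b, hb⟩
      exact ⟨b, _, (Multiset.cons_erase hb).symm⟩
    simp only [Multiset.card_cons, Nat.succ_inj] at hL hR
    simp only [Multiset.map_cons, Multiset.sum_cons] at hsums ⊢
    -- inner induction on discrepancy
    have inner : ∀ d (b : {a : Fin (n + 1) → ℕ // (∑ i, a i) = c})
        (R₀ : Multiset {a : Fin (n + 1) → ℕ // (∑ i, a i) = c}),
        Multiset.card R₀ = k →
        (∀ j, a.1 j + (L₀.map fun p => p.1 j).sum = b.1 j + (R₀.map fun p => p.1 j).sum) →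
        (∑ j, (a.1 j - b.1 j)) = d →
        f a + (L₀.map f).sum = f b + (R₀.map f).sum := by
      intro d
      induction d using Nat.strong_induction_on with
      | _ d innerIH =>
        intro b R₀ hcard hsums hd
        rcases Nat.eq_zero_or_pos d with hd0 | hdpos
        · -- a = b
          subst hd0
          have hle : ∀ t, a.1 t ≤ b.1 t := by
            intro t
            have h0 : (a.1 t - b.1 t) = 0 := by
              by_contra hne
              have hpos : 0 < a.1 t - b.1 t := Nat.pos_of_ne_zero hne
              have : 0 < ∑ j, (a.1 j - b.1 j) :=
                Finset.sum_pos' (fun i _ => Nat.zero_le _) ⟨t, mem_univ t, hpos⟩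
              omega
            omega
          have hab : a = b := by
            apply Subtype.ext; funext t
            have h1 := a.2; have h2 := b.2
            by_contra hne
            have hlt : a.1 t < b.1 t := lt_of_le_of_ne (hle t) hne
            have : ∑ i, a.1 i < ∑ i, b.1 i :=
              Finset.sum_lt_sum (fun i _ => hle i) ⟨t, mem_univ t, hlt⟩
            omega
          subst hab
          congr 1
          apply ih L₀ R₀ hL hcard
          intro j
          exact Nat.add_left_cancel (hsums j)
        · -- find j with a j > b j
          have hj : ∃ j, b.1 j < a.1 j := by
            by_contra hno
            push_neg at hno
            have : (∑ j, (a.1 j - b.1 j)) = 0 :=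
              Finset.sum_eq_zero fun j _ => by have := hno j; omega
            omega
          obtain ⟨j, hj⟩ := hj
          have hj' : ∃ j', a.1 j' < b.1 j' := by
            by_contra hno
            push_neg at hno
            have : ∑ i, b.1 i < ∑ i, a.1 i :=
              Finset.sum_lt_sum (fun i _ => hno i) ⟨j, mem_univ j, hj⟩
            have := a.2; have := b.2; omega
          obtain ⟨j', hj'⟩ := hj'
          have hjj' : j ≠ j' := by rintro rfl; omega
          -- find x in R₀ with x j ≥ 1
          have hx : ∃ x ∈ R₀, x.1 j ≠ 0 := by
            by_contra hno
            push_neg at hno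
            have : (R₀.map fun p => p.1 j).sum = 0 := by
              apply Multiset.sum_eq_zero
              intro y hy
              rcases Multiset.mem_map.1 hy with ⟨x, hxR, rfl⟩
              exact hno x hxR
            have h1 := hsums j
            rw [this] at h1
            generalize (Multiset.map (fun p => p.1 j) L₀).sum = S at h1
            clear this
            omega
          obtain ⟨x, hxR, hxj⟩ := hx
          obtain ⟨R₁, rfl⟩ : ∃ R₁, R₀ = x ::ₘ R₁ :=
            ⟨_, (Multiset.cons_erase hxR).symm⟩
          have hbj' : b.1 j' ≠ 0 := by omega
          set b' := simplexMove j j' hjj' b hbj' with hb'def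
          set x' := simplexMove j' j (Ne.symm hjj') x hxj with hx'def
          have hbx : ∀ t, b.1 t + x.1 t = b'.1 t + x'.1 t := by
            intro t
            show b.1 t + x.1 t =
              (if t = j then b.1 t + 1 else if t = j' then b.1 t - 1 else b.1 t)
              + (if t = j' then x.1 t + 1 else if t = j then x.1 t - 1 else x.1 t)
            by_cases h : t = j
            · subst h; simp [if_neg hjj']; omega
            · by_cases h' : t = j'
              · subst h'; simp [h]; omega
              · simp [h, h']
          have hswap : f b + f x = f b' + f x' := hrel b x b' x' (fun t => hbx t.succ)
          have hd' : (∑ t, (a.1 t - b'.1 t)) < d := by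
            rw [← hd]
            apply Finset.sum_lt_sum
            · intro t _
              show a.1 t - (if t = j then b.1 t + 1 else if t = j' then b.1 t - 1 else b.1 t)
                ≤ a.1 t - b.1 t
              by_cases h : t = j
              · subst h; simp; omega
              · by_cases h' : t = j'
                · subst h'; simp [h]; omega
                · simp [h, h']
            · refine ⟨j, mem_univ j, ?_⟩
              show a.1 j - (if j = j then b.1 j + 1 else _) < a.1 j - b.1 j
              simp; omega
          have happ := innerIH _ hd' b' (x' ::ₘ R₁) (by simpa using hcard)
            (fun t => by
              have := hsums t
              have h2 := hbx t
              simp only [Multiset.map_cons, Multiset.sum_cons] at this ⊢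
              generalize (Multiset.map (fun p => p.1 t) L₀).sum = S at this ⊢
              generalize (Multiset.map (fun p => p.1 t) R₁).sum = T at this ⊢
              omega) rfl
          rw [happ]
          simp only [Multiset.map_cons, Multiset.sum_cons]
          rw [← add_assoc, ← hswap, add_assoc]
    exact inner _ b R₀ hR (fun j => hsums j) rfl


private def simplexVtx (c n : ℕ) (i : Fin (n + 1)) : {a : Fin (n + 1) → ℕ // (∑ i, a i) = c} :=
  ⟨fun t => if t = i then c else 0, by simp [Finset.sum_ite_eq']⟩

private def simplexNear (c n : ℕ) (hc : 1 ≤ c) (i j : Fin (n + 1)) :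
    {a : Fin (n + 1) → ℕ // (∑ i, a i) = c} :=
  ⟨fun t => (if t = i then 1 else 0) + (if t = j then c - 1 else 0), by
    rw [Finset.sum_add_distrib]
    simp only [Finset.sum_ite_eq', Finset.mem_univ, if_true]
    omega⟩

private lemma bind_map_sum {α β M : Type*} [AddCommMonoid M] (s : Finset α) (m : α → ℕ)
    (q : α → β) (g : β → M) :
    ((s.val.bind fun i => Multiset.replicate (m i) (q i)).map g).sum = ∑ i ∈ s, m i • g (q i) := by
  rw [Multiset.map_bind, Multiset.sum_bind]
  simp only [Multiset.map_replicate, Multiset.sum_replicate]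
  rfl

section Steps

variable {c n : ℕ} {σM : Type*} [AddCommMonoid σM]
  (φ : {a : Fin (n + 1) → ℕ // (∑ i, a i) = c} → σM)

private lemma stepA (hrel : ∀ a b a' b' : {a : Fin (n + 1) → ℕ // (∑ i, a i) = c},
      (∀ j : Fin n, a.1 j.succ + b.1 j.succ = a'.1 j.succ + b'.1 j.succ) →
      φ a + φ b = φ a' + φ b') (a : {a : Fin (n + 1) → ℕ // (∑ i, a i) = c}) :
    c • φ a = ∑ i, a.1 i • φ (simplexVtx c n i) := by
  have h := key_multiset φ hrel c (Multiset.replicate c a)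
      (Finset.univ.val.bind fun i => Multiset.replicate (a.1 i) (simplexVtx c n i))
      (Multiset.card_replicate _ _)
      (by
        rw [Multiset.card_bind]
        simp only [Function.comp_def, Multiset.card_replicate]
        exact a.2)
      (by
        intro j
        rw [Multiset.map_replicate, Multiset.sum_replicate, bind_map_sum]
        simp only [simplexVtx, smul_eq_mul, mul_ite, mul_zero, Finset.sum_ite_eq,
          Finset.mem_univ, if_true]
        exact mul_comm _ _)
  rw [Multiset.map_replicate, Multiset.sum_replicate, bind_map_sum] at h
  exact h

private lemma stepB (hrel : ∀ a b a' b' : {a : Fin (n + 1) → ℕ // (∑ i, a i) = c},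
      (∀ j : Fin n, a.1 j.succ + b.1 j.succ = a'.1 j.succ + b'.1 j.succ) →
      φ a + φ b = φ a' + φ b') (hc : 1 ≤ c) (i j : Fin (n + 1)) :
    c • φ (simplexNear c n hc i j) = φ (simplexVtx c n i) + (c - 1) • φ (simplexVtx c n j) := by
  have h := key_multiset φ hrel c (Multiset.replicate c (simplexNear c n hc i j))
      ((simplexVtx c n i) ::ₘ Multiset.replicate (c - 1) (simplexVtx c n j))
      (Multiset.card_replicate _ _)
      (by simp; omega)
      (by
        intro t
        rw [Multiset.map_replicate, Multiset.sum_replicate]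
        simp only [Multiset.map_cons, Multiset.sum_cons, Multiset.map_replicate,
          Multiset.sum_replicate, smul_eq_mul]
        show c * ((if t = i then 1 else 0) + (if t = j then c - 1 else 0))
          = (if t = i then c else 0) + (c - 1) * (if t = j then c else 0)
        by_cases h1 : t = i <;> by_cases h2 : t = j <;>
          simp [h1, h2, mul_add, mul_comm])
  rw [Multiset.map_replicate, Multiset.sum_replicate] at h
  simpa using h

end Steps


open Finset in
/-- Factorization in a free commutative monoid: a family `φ` indexed by the lattice points of
`cΔₙ` (given by their barycentric coordinates `a` with `∑ a = c`) compatible with the binomial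
relations of `cΔₙ` decomposes as `φₐ = ψ + ∑ aᵢ • ηᵢ`. Here the free commutative monoid is
`σ →₀ ℕ` (written additively). -/
theorem free_comm_monoid_simplex_factorization
    (σ : Type*) (c n : ℕ) (hc : 1 ≤ c)
    (φ : {a : Fin (n + 1) → ℕ // (∑ i, a i) = c} → (σ →₀ ℕ))
    (hrel : ∀ a b a' b' : {a : Fin (n + 1) → ℕ // (∑ i, a i) = c},
      (∀ j : Fin n, a.1 j.succ + b.1 j.succ = a'.1 j.succ + b'.1 j.succ) →
      φ a + φ b = φ a' + φ b') :
    ∃ (ψ : σ →₀ ℕ) (η : Fin (n + 1) → (σ →₀ ℕ)),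
      ∀ a : {a : Fin (n + 1) → ℕ // (∑ i, a i) = c},
        φ a = ψ + ∑ i, a.1 i • η i := by
  classical
  obtain ⟨m, rfl⟩ : ∃ m, c = m + 1 := ⟨c - 1, by omega⟩
  -- choice of a minimizing vertex at each coordinate s
  have hmin : ∀ s : σ, ∃ j : Fin (n + 1),
      ∀ i, φ (simplexVtx (m + 1) n j) s ≤ φ (simplexVtx (m + 1) n i) s := by
    intro s
    obtain ⟨j, -, hj⟩ := Finset.exists_min_image Finset.univ
      (fun i => φ (simplexVtx (m + 1) n i) s) ⟨0, mem_univ 0⟩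
    exact ⟨j, fun i => hj i (mem_univ i)⟩
  choose js hjs using hmin
  -- pointwise versions of the two multiset identities
  have hA : ∀ (a : {a : Fin (n + 1) → ℕ // (∑ i, a i) = m + 1}) (s : σ),
      (m + 1) * φ a s = ∑ i, a.1 i * φ (simplexVtx (m + 1) n i) s := by
    intro a s
    simpa [Finsupp.finset_sum_apply, Finsupp.smul_apply, smul_eq_mul] using
      DFunLike.congr_fun (stepA φ hrel a) s
  have hB : ∀ (i : Fin (n + 1)) (s : σ),
      (m + 1) * φ (simplexNear (m + 1) n hc i (js s)) s
        = φ (simplexVtx (m + 1) n i) s + m * φ (simplexVtx (m + 1) n (js s)) s := by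
    intro i s
    simpa [Finsupp.smul_apply, smul_eq_mul, Nat.add_sub_cancel] using
      DFunLike.congr_fun (stepB φ hrel hc i (js s)) s
  set ψf : σ → ℕ := fun s => φ (simplexVtx (m + 1) n (js s)) s with hψf
  set ηf : Fin (n + 1) → σ → ℕ :=
    fun i s => φ (simplexNear (m + 1) n hc i (js s)) s - ψf s with hηf
  have hge : ∀ (i : Fin (n + 1)) (s : σ), ψf s ≤ φ (simplexNear (m + 1) n hc i (js s)) s := by
    intro i s
    have h3 : (m + 1) * ψf s ≤ (m + 1) * φ (simplexNear (m + 1) n hc i (js s)) s := by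
      rw [hB i s]
      calc (m + 1) * ψf s = ψf s + m * ψf s := by ring
        _ ≤ φ (simplexVtx (m + 1) n i) s + m * ψf s :=
            Nat.add_le_add_right (hjs s i) _
    exact Nat.le_of_mul_le_mul_left h3 (by omega)
  have hkey : ∀ (i : Fin (n + 1)) (s : σ),
      φ (simplexVtx (m + 1) n i) s = (m + 1) * ηf i s + ψf s := by
    intro i s
    obtain ⟨e, he⟩ : ∃ e, φ (simplexNear (m + 1) n hc i (js s)) s = ψf s + e :=
      ⟨_, (Nat.add_sub_cancel' (hge i s)).symm⟩
    have heη : ηf i s = e := by simp [hηf, he]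
    have hB' := hB i s
    rw [he] at hB'
    have hps : φ (simplexVtx (m + 1) n (js s)) s = ψf s := rfl
    rw [hps] at hB'
    rw [heη]
    have hexp : (m + 1) * (ψf s + e) = (ψf s + m * ψf s) + (m + 1) * e := by ring
    rw [hexp] at hB'
    omega
  refine ⟨Finsupp.onFinset (φ (simplexVtx (m + 1) n 0)).support ψf (fun s h => by
      rw [Finsupp.mem_support_iff]
      have := hjs s 0
      have h' : ψf s = φ (simplexVtx (m + 1) n (js s)) s := rfl
      omega),
    fun i => Finsupp.onFinset (φ (simplexVtx (m + 1) n i)).support (ηf i) (fun s h => by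
      rw [Finsupp.mem_support_iff]
      have h1 := hkey i s
      have h2 : ηf i s ≤ (m + 1) * ηf i s := Nat.le_mul_of_pos_left _ (by omega)
      generalize (m + 1) * ηf i s = Y at h1 h2
      omega), ?_⟩
  intro a
  ext s
  rw [Finsupp.add_apply, Finsupp.finset_sum_apply, Finsupp.onFinset_apply]
  have hsum : ∀ i, ((a.1 i • Finsupp.onFinset (φ (simplexVtx (m + 1) n i)).support (ηf i)
      (fun s h => by
        rw [Finsupp.mem_support_iff]
        have h1 := hkey i s
        have h2 : ηf i s ≤ (m + 1) * ηf i s := Nat.le_mul_of_pos_left _ (by omega)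
        generalize (m + 1) * ηf i s = Y at h1 h2
        omega)) s) = a.1 i * ηf i s := by
    intro i
    rw [Finsupp.smul_apply, Finsupp.onFinset_apply, smul_eq_mul]
  rw [Finset.sum_congr rfl (fun i _ => hsum i)]
  apply Nat.eq_of_mul_eq_mul_left (show 0 < m + 1 by omega)
  rw [hA a s]
  calc ∑ i, a.1 i * φ (simplexVtx (m + 1) n i) s
      = ∑ i, ((m + 1) * (a.1 i * ηf i s) + a.1 i * ψf s) :=
        Finset.sum_congr rfl (fun i _ => by rw [hkey i s]; ring)
    _ = (m + 1) * (∑ i, a.1 i * ηf i s) + (∑ i, a.1 i) * ψf s := by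
        rw [Finset.sum_add_distrib, ← Finset.mul_sum, ← Finset.sum_mul]
    _ = (m + 1) * (ψf s + ∑ i, a.1 i * ηf i s) := by rw [a.2]; ring
end
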